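/- arXiv:2007.09504 — 6 statements merged into one kernel-verified Lean document; each statement's English description precedes it below -/
import Mathlib

section
/- For every x ∈ ℂ∖{z_1,…,z_n}: (i) D_1(x) = 0 as an operator on V; (ii) (2πi)^{−2}·D_2(x) = −(μ² + μ(e11−e22) − e11·e22)/4 + Σ_{s=1}^n [ (m_s(m_s+2)/4 + K_s(z,μ))/(1 − x/z_s) − (m_s(m_s+2)/4)/(1 − x/z_s)² ] as operators on V. -/
open Complex Finset

namespace Paper

noncomputable section

variable {n : ℕ}

/-- The index set of the natural basis of `V = V_{m 0} ⊗ ⋯ ⊗ V_{m (n-1)}`: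
the basis vector `v_{i_1} ⊗ ⋯ ⊗ v_{i_n}` corresponds to the index `(i_1,…,i_n)`. -/
abbrev Idx (m : Fin n → ℕ) := ∀ s : Fin n, Fin (m s + 1)

/-- The tensor product `V = V_{m 0} ⊗ ⋯ ⊗ V_{m (n-1)}` realized concretely as the space of
ℂ-valued functions on the index set of its natural basis. -/
abbrev TV (m : Fin n → ℕ) := Idx m → ℂ

/-- The linear operator `f ↦ (i ↦ c i * f (g i))`; all the basic operators below are of
this form. -/
def mulShift {ι : Type*} (c : ι → ℂ) (g : ι → ι) : Module.End ℂ (ι → ℂ) where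
  toFun f i := c i * f (g i)
  map_add' f h := by funext i; simp [mul_add]
  map_smul' a f := by
    funext i
    simp only [Pi.smul_apply, smul_eq_mul, RingHom.id_apply]
    ring

variable (m : Fin n → ℕ)

/-- `e11` acting in the `s`-th tensor factor: `e11 · v_k = ((m-2k)/2) v_k`. -/
def E11 (s : Fin n) : Module.End ℂ (TV m) :=
  mulShift (fun idx => ((m s : ℂ) - 2 * ((idx s : ℕ) : ℂ)) / 2) id

/-- `e22` acting in the `s`-th tensor factor: `e22 · v_k = -((m-2k)/2) v_k`. -/
def E22 (s : Fin n) : Module.End ℂ (TV m) :=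
  mulShift (fun idx => -(((m s : ℂ) - 2 * ((idx s : ℕ) : ℂ)) / 2)) id

/-- `e21` acting in the `s`-th tensor factor: `e21 · v_k = (k+1) v_{k+1}`. -/
def E21 (s : Fin n) : Module.End ℂ (TV m) :=
  mulShift (fun idx => ((idx s : ℕ) : ℂ)) (fun idx => Function.update idx s (idx s - 1))

/-- `e12` acting in the `s`-th tensor factor: `e12 · v_k = (m-k+1) v_{k-1}`. -/
def E12 (s : Fin n) : Module.End ℂ (TV m) :=
  mulShift (fun idx => (m s : ℂ) - ((idx s : ℕ) : ℂ)) (fun idx => Function.update idx s (idx s + 1))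

/-- The diagonal action `e11 = Σ_s e11^{(s)}` on the tensor product. -/
def e11T : Module.End ℂ (TV m) := ∑ s, E11 m s
def e22T : Module.End ℂ (TV m) := ∑ s, E22 m s
def e21T : Module.End ℂ (TV m) := ∑ s, E21 m s
def e12T : Module.End ℂ (TV m) := ∑ s, E12 m s

/-- `v ∈ V[ν]`, i.e. `(e11 - e22) v = ν v`. -/
def inWt (ν : ℤ) (v : TV m) : Prop := (e11T m - e22T m) v = ((ν : ℤ) : ℂ) • v

/-- The Weyl involution `σ`, acting by `σ v_k = (-1)^k v_{m-k}` in each factor. -/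
def sigmaOp : Module.End ℂ (TV m) :=
  mulShift (fun idx => ∏ s, (-1 : ℂ) ^ (m s - (idx s : ℕ))) (fun idx s => (idx s).rev)

/-- The weight of a basis vector: `wt(i) = Σ_s (m_s - 2 i_s)`. -/
def wt (idx : Idx m) : ℤ := ∑ s, ((m s : ℤ) - 2 * ((idx s : ℕ) : ℤ))

/-- The operator `p(κ) = Σ_{k ≥ 0} e21^k e12^k (1/k!) Π_{j=0}^{k-1} (κ + e22 - e11 - j)^{-1}`.
The operator `e22 - e11` is diagonal in the chosen basis with eigenvalue `-wt(idx)` on the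
basis vector labelled by `idx`, so the (partial) inverses `(κ + e22 - e11 - j)^{-1}` are the
diagonal operators with entries `(κ - wt(idx) - j)⁻¹`.  The sum is finite on `V` since
`e12` is nilpotent:  `e12^k = 0` for `k > M = Σ_s m_s`. -/
def pOp (κ : ℂ) : Module.End ℂ (TV m) :=
  ∑ k ∈ Finset.range ((∑ s, m s) + 1),
    (e21T m) ^ k * (e12T m) ^ k *
      mulShift (fun idx => ((k.factorial : ℂ))⁻¹ *
        ∏ j ∈ Finset.range k, (κ - ((wt m idx : ℤ) : ℂ) - (j : ℂ))⁻¹) id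

/-- The operator `𝒜(κ) = σ ∘ p(κ)`. -/
def Aop (κ : ℂ) : Module.End ℂ (TV m) := sigmaOp m * pOp m κ

/-- `Ω₀^{(s,t)} = e11^{(s)} e11^{(t)} + e22^{(s)} e22^{(t)}`. -/
def Om0 (s t : Fin n) : Module.End ℂ (TV m) := E11 m s * E11 m t + E22 m s * E22 m t

/-- `Ω₁₂^{(s,t)} = e12^{(s)} e21^{(t)}`. -/
def Om12 (s t : Fin n) : Module.End ℂ (TV m) := E12 m s * E21 m t

/-- `Ω₂₁^{(s,t)} = e21^{(s)} e12^{(t)}`. -/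
def Om21 (s t : Fin n) : Module.End ℂ (TV m) := E21 m s * E12 m t

/-- The trigonometric r-matrix `r^{(s,t)}(x) = (Ω₊ x + Ω₋)/(x-1)` acting in the `s`-th and
`t`-th tensor factors, where `Ω₊ = ½Ω₀ + Ω₁₂` and `Ω₋ = ½Ω₀ + Ω₂₁`. -/
def rOp (s t : Fin n) (x : ℂ) : Module.End ℂ (TV m) :=
  (x - 1)⁻¹ • (x • ((2 : ℂ)⁻¹ • Om0 m s t + Om12 m s t) + ((2 : ℂ)⁻¹ • Om0 m s t + Om21 m s t))

/-- The trigonometric Gaudin operators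
`K_s(z,μ) = (μ/2)(e11-e22)^{(s)} + Σ_{t ≠ s} r^{(s,t)}(z_s/z_t)`. -/
def Kop (z : Fin n → ℂ) (μ : ℂ) (s : Fin n) : Module.End ℂ (TV m) :=
  (μ / 2) • (E11 m s - E22 m s) + ∑ t ∈ Finset.univ.erase s, rOp m s t (z s / z t)

/-- The matrix entry `M₁₁(x) = 2πi Σ_s (1-x/z_s)⁻¹ e11^{(s)} - πi e11`. -/
def M11 (z : Fin n → ℂ) (x : ℂ) : Module.End ℂ (TV m) :=
  (2 * (Real.pi : ℂ) * I) • (∑ s, (1 - x / z s)⁻¹ • E11 m s) - ((Real.pi : ℂ) * I) • e11T m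

/-- `M₁₂(x) = 2πi Σ_s (1-x/z_s)⁻¹ e21^{(s)} - 2πi e21`. -/
def M12 (z : Fin n → ℂ) (x : ℂ) : Module.End ℂ (TV m) :=
  (2 * (Real.pi : ℂ) * I) • (∑ s, (1 - x / z s)⁻¹ • E21 m s) -
    (2 * (Real.pi : ℂ) * I) • e21T m

/-- `M₂₁(x) = 2πi Σ_s (1-x/z_s)⁻¹ e12^{(s)}`. -/
def M21 (z : Fin n → ℂ) (x : ℂ) : Module.End ℂ (TV m) :=
  (2 * (Real.pi : ℂ) * I) • (∑ s, (1 - x / z s)⁻¹ • E12 m s)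

/-- `M₂₂(x) = 2πi Σ_s (1-x/z_s)⁻¹ e22^{(s)} - πi e22`. -/
def M22 (z : Fin n → ℂ) (x : ℂ) : Module.End ℂ (TV m) :=
  (2 * (Real.pi : ℂ) * I) • (∑ s, (1 - x / z s)⁻¹ • E22 m s) - ((Real.pi : ℂ) * I) • e22T m

/-- The derivative `(dM₂₂/dx)(x) = 2πi Σ_s z_s⁻¹ (1-x/z_s)⁻² e22^{(s)}`. -/
def M22d (z : Fin n → ℂ) (x : ℂ) : Module.End ℂ (TV m) :=
  (2 * (Real.pi : ℂ) * I) • (∑ s, ((z s)⁻¹ * ((1 - x / z s)⁻¹) ^ 2) • E22 m s)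

/-- The coefficient `D₂(x)` of the universal differential operator
`𝒟 = cdet [[∂_u - πiμ + M₁₁, M₁₂],[M₂₁, ∂_u + πiμ + M₂₂]] = ∂_u² + D₁(x) ∂_u + D₂(x)`
(where `x = e^{-2πiu}`, `∂_u = -2πi x ∂_x`), namely
`D₂(x) = (-πiμ + M₁₁(x)) ∘ (πiμ + M₂₂(x)) - 2πi x (dM₂₂/dx)(x) - M₂₁(x) ∘ M₁₂(x)`. -/
def D2 (z : Fin n → ℂ) (μ : ℂ) (x : ℂ) : Module.End ℂ (TV m) :=
  (-(((Real.pi : ℂ) * I * μ)) • (1 : Module.End ℂ (TV m)) + M11 m z x) *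
      ((((Real.pi : ℂ) * I * μ)) • (1 : Module.End ℂ (TV m)) + M22 m z x)
    - (2 * (Real.pi : ℂ) * I * x) • M22d m z x
    - M21 m z x * M12 m z x

/-- The Bethe ansatz equations for the triple `(z; μ; V[ν])`, `ν = M - 2m'`:  `t` is a tuple
of pairwise distinct complex numbers, each nonzero and distinct from every `z_s`, with
`(1 - μ + ν/2)/t_i + Σ_{j≠i} 2/(t_i - t_j) - Σ_s m_s/(t_i - z_s) = 0` for all `i`. -/
def BAE (z : Fin n → ℂ) (μ : ℂ) {m' : ℕ} (t : Fin m' → ℂ) : Prop :=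
  Function.Injective t ∧ (∀ i, t i ≠ 0) ∧ (∀ i s, t i ≠ z s) ∧
    ∀ i, (1 - μ + ((∑ s, (m s : ℂ)) - 2 * (m' : ℂ)) / 2) / t i
        + (∑ j ∈ Finset.univ.erase i, 2 / (t i - t j))
        - ∑ s, (m s : ℂ) / (t i - z s) = 0

/-- The partial sum `ℓ_1 + ⋯ + ℓ_{s-1}` (0-based). -/
def pref (ℓv : Idx m) (s : Fin n) : ℕ :=
  ∑ u ∈ Finset.univ.filter (fun u => u < s), (ℓv u : ℕ)

/-- Extension of a tuple `t : Fin m' → ℂ` to a function on `ℕ` (by zero). -/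
def extt {m' : ℕ} (t : Fin m' → ℂ) : ℕ → ℂ := fun i => if h : i < m' then t ⟨i, h⟩ else 0

/-- The coordinate `ω_ℓ(t,z) = Σ_{ρ ∈ S_{m'}} Π_{s=1}^n Π_{i=ℓ_1+⋯+ℓ_{s-1}+1}^{ℓ_1+⋯+ℓ_s}
(t_{ρ(i)} - z_s)⁻¹` of the weight function. -/
def omegaCoeff (z : Fin n → ℂ) {m' : ℕ} (t : Fin m' → ℂ) (ℓv : Idx m) : ℂ :=
  ∑ ρ : Equiv.Perm (Fin m'), ∏ s : Fin n,
    ∏ i ∈ Finset.Ico (pref m ℓv s) (pref m ℓv s + (ℓv s : ℕ)), (extt (t ∘ ρ) i - z s)⁻¹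

/-- The Bethe vector (weight function) `ω(t,z) = Σ_{ℓ ∈ C} ω_ℓ(t,z) v_ℓ ∈ V[M - 2m']`. -/
def betheVec (z : Fin n → ℂ) {m' : ℕ} (t : Fin m' → ℂ) : TV m :=
  fun ℓv => if (∑ s, ((ℓv s : ℕ))) = m' then omegaCoeff m z t ℓv else 0

/-- The eigenvalue `k_s(t,z,μ) = (m_s/2)[(μ - ν/2 + m_s/2) + Σ_{p≠s} m_p z_s/(z_s-z_p)
+ 2 Σ_i z_s/(t_i - z_s)]`, with `ν = M - 2m'`. -/
def kEig (z : Fin n → ℂ) (μ : ℂ) {m' : ℕ} (t : Fin m' → ℂ) (s : Fin n) : ℂ :=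
  ((m s : ℂ) / 2) * ((μ - ((∑ u, (m u : ℂ)) - 2 * (m' : ℂ)) / 2 + (m s : ℂ) / 2)
    + (∑ p ∈ Finset.univ.erase s, (m p : ℂ) * z s / (z s - z p))
    + 2 * ∑ i, z s / (t i - z s))

/-- The scalar eigenvalue function `E₂(x, t, z, μ)` of `D₂(x)` on the Bethe vector, i.e.
the coefficient of the fundamental differential operator `ℰ = ∂_u² + E₂(x)`. -/
def E2fun (z : Fin n → ℂ) (μ : ℂ) {m' : ℕ} (t : Fin m' → ℂ) (x : ℂ) : ℂ :=
  (2 * (Real.pi : ℂ) * I) ^ 2 *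
    (-(μ + ((∑ u, (m u : ℂ)) - 2 * (m' : ℂ)) / 2) ^ 2 / 4
      + ∑ s, (((m s : ℂ) * ((m s : ℂ) + 2) / 4 + kEig m z μ t s) / (1 - x / z s)
          - ((m s : ℂ) * ((m s : ℂ) + 2) / 4) / (1 - x / z s) ^ 2))



section Aux

@[simp] lemma mulShift_apply {ι : Type*} (c : ι → ℂ) (g : ι → ι) (f : ι → ℂ) (i : ι) :
    mulShift c g f i = c i * f (g i) := rfl

variable (m : Fin n → ℕ)

lemma endExt {A B : Module.End ℂ (TV m)} (h : ∀ f idx, A f idx = B f idx) : A = B :=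
  LinearMap.ext fun f => funext fun idx => h f idx

lemma E22_eq (s : Fin n) : E22 m s = -E11 m s := by
  apply endExt; intro f idx
  simp [E22, E11]

lemma e22T_eq : e22T m = - e11T m := by
  simp [e22T, e11T, E22_eq]

lemma E11_comm (s t : Fin n) : E11 m s * E11 m t = E11 m t * E11 m s := by
  apply endExt; intro f idx
  simp [E11, Module.End.mul_apply]
  ring

lemma E21_E12_comm {s t : Fin n} (hst : s ≠ t) :
    E21 m s * E12 m t = E12 m t * E21 m s := by
  apply endExt; intro f idx
  simp only [Module.End.mul_apply, E21, E12, mulShift_apply]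
  rw [Function.update_of_ne hst.symm, Function.update_of_ne hst,
    Function.update_comm hst]
  ring

lemma casimir (s : Fin n) : E12 m s * E21 m s
    = ((m s : ℂ) * ((m s : ℂ) + 2) / 4) • (1 : Module.End ℂ (TV m))
      - E11 m s * E11 m s + E11 m s := by
  apply endExt; intro f idx
  simp only [Module.End.mul_apply, E12, E21, E11, mulShift_apply,
    Function.update_self, LinearMap.sub_apply, LinearMap.add_apply,
    LinearMap.smul_apply, Module.End.one_apply, Pi.smul_apply, smul_eq_mul,
    Pi.sub_apply, Pi.add_apply, Function.update_idem, id_eq]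
  rcases Nat.lt_succ_iff_lt_or_eq.mp (idx s).isLt with hk | hk
  · have h1 : ((idx s + 1 : Fin (m s + 1)) : ℕ) = (idx s : ℕ) + 1 := by
      rw [Fin.add_def]
      simp [Nat.mod_eq_of_lt (Nat.succ_lt_succ hk)]
    have h2 : (idx s + 1 - 1 : Fin (m s + 1)) = idx s := by
      simp
    rw [h2, Function.update_eq_self, h1]
    push_cast
    ring
  · have hkc : (((idx s : ℕ) : ℂ)) = (m s : ℂ) := by exact_mod_cast congrArg Nat.cast hk
    rw [hkc]
    ring

end Aux
section Aux2

/-- abbreviation for `(1 - x/z_s)⁻¹` -/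
def wc (z : Fin n → ℂ) (x : ℂ) (s : Fin n) : ℂ := (1 - x / z s)⁻¹

variable {z : Fin n → ℂ} {x : ℂ}

lemma one_sub_div_ne {s : Fin n} (hz0 : z s ≠ 0) (hx : x ≠ z s) : 1 - x / z s ≠ 0 := by
  rw [sub_ne_zero]
  intro h
  apply hx
  field_simp at h
  exact h.symm

lemma wc_eq {s : Fin n} (hs0 : z s ≠ 0) (hxs : x ≠ z s) :
    wc z x s = z s / (z s - x) := by
  unfold wc
  rw [one_sub_div hs0, inv_div]

lemma keyId {s t : Fin n} (hs0 : z s ≠ 0) (ht0 : z t ≠ 0) (hxs : x ≠ z s) (hxt : x ≠ z t)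
    (hst : z s ≠ z t) :
    wc z x s * (z t / (z s - z t)) + wc z x t * (z s / (z t - z s))
      = -(wc z x s * wc z x t) := by
  have h1 := one_sub_div_ne hs0 hxs
  have h2 := one_sub_div_ne ht0 hxt
  have h3 : z s - z t ≠ 0 := sub_ne_zero.mpr hst
  have h4 : z t - z s ≠ 0 := sub_ne_zero.mpr (Ne.symm hst)
  have h5 : z s - x ≠ 0 := sub_ne_zero.mpr (Ne.symm hxs)
  have h6 : z t - x ≠ 0 := sub_ne_zero.mpr (Ne.symm hxt)
  rw [wc_eq hs0 hxs, wc_eq ht0 hxt]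
  field_simp
  ring

lemma xwId {s : Fin n} (hs0 : z s ≠ 0) (hxs : x ≠ z s) :
    x * (z s)⁻¹ * (wc z x s) ^ 2 = wc z x s ^ 2 - wc z x s := by
  have h5 : z s - x ≠ 0 := sub_ne_zero.mpr (Ne.symm hxs)
  rw [wc_eq hs0 hxs]
  field_simp
  ring

lemma binv {s t : Fin n} (ht0 : z t ≠ 0) (hst : z s ≠ z t) :
    (z s / z t - 1)⁻¹ = z t / (z s - z t) := by
  have h3 : z s - z t ≠ 0 := sub_ne_zero.mpr hst
  field_simp

lemma sum_erase_swap {β : Type*} [AddCommMonoid β] (F : Fin n → Fin n → β) :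
    ∑ s : Fin n, ∑ t ∈ Finset.univ.erase s, F s t
      = ∑ s : Fin n, ∑ t ∈ Finset.univ.erase s, F t s :=
  Finset.sum_comm' (fun a b => by simp [Finset.mem_erase, ne_comm])

lemma sum_split_diag {β : Type*} [AddCommMonoid β] (F : Fin n → Fin n → β) :
    ∑ s : Fin n, ∑ t, F s t = (∑ s, F s s) + ∑ s : Fin n, ∑ t ∈ Finset.univ.erase s, F s t := by
  rw [← Finset.sum_add_distrib]
  exact Finset.sum_congr rfl fun s _ => (Finset.add_sum_erase _ _ (Finset.mem_univ s)).symm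

end Aux2
section Aux3

variable (m : Fin n → ℕ) (z : Fin n → ℂ) (μ x : ℂ)

/-- `H = (2πi)⁻¹ M₁₁`. -/
def Hop : Module.End ℂ (TV m) := ∑ s, (wc z x s - 2⁻¹) • E11 m s

lemma M11_eq : M11 m z x = (2 * (Real.pi : ℂ) * I) • Hop m z x := by
  unfold M11 Hop e11T wc
  rw [Finset.smul_sum, Finset.smul_sum, Finset.smul_sum, ← Finset.sum_sub_distrib]
  refine Finset.sum_congr rfl fun s _ => ?_
  match_scalars
  ring

lemma M22_eq : M22 m z x = - M11 m z x := by
  unfold M22 M11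
  rw [e22T_eq]
  simp only [E22_eq, smul_neg, Finset.sum_neg_distrib]
  module

lemma M11_add_M22 : M11 m z x + M22 m z x = 0 := by
  rw [M22_eq]; exact add_neg_cancel _

lemma M21_eq : M21 m z x = (2 * (Real.pi : ℂ) * I) • ∑ s, wc z x s • E12 m s := rfl

lemma M12_eq : M12 m z x = (2 * (Real.pi : ℂ) * I) • ∑ s, (wc z x s - 1) • E21 m s := by
  unfold M12 e21T wc
  rw [Finset.smul_sum, Finset.smul_sum, Finset.smul_sum, ← Finset.sum_sub_distrib]
  refine Finset.sum_congr rfl fun s _ => ?_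
  match_scalars
  ring

lemma M22d_eq (hz0 : ∀ s, z s ≠ 0) (hx : ∀ s, x ≠ z s) :
    (2 * (Real.pi : ℂ) * I * x) • M22d m z x
      = -(((2 * (Real.pi : ℂ) * I) ^ 2) • ∑ s, (wc z x s ^ 2 - wc z x s) • E11 m s) := by
  unfold M22d wc
  rw [smul_smul, Finset.smul_sum, Finset.smul_sum, ← Finset.sum_neg_distrib]
  refine Finset.sum_congr rfl fun s _ => ?_
  rw [E22_eq]
  have h := xwId (z := z) (x := x) (s := s) (hz0 s) (hx s)
  unfold wc at h
  match_scalars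
  linear_combination (-((2 * (Real.pi : ℂ) * I) ^ 2)) * h

lemma Om0_eq (s t : Fin n) : Om0 m s t = (2 : ℂ) • (E11 m s * E11 m t) := by
  apply endExt
  intro f idx
  simp [Om0, E11, E22, Module.End.mul_apply]
  ring

lemma rOp_eq {s t : Fin n} (hst : s ≠ t) (ht0 : z t ≠ 0) (hzst : z s ≠ z t) :
    rOp m s t (z s / z t)
      = (1 + 2 * (z t / (z s - z t))) • (E11 m s * E11 m t)
        + (1 + z t / (z s - z t)) • (E12 m s * E21 m t)
        + (z t / (z s - z t)) • (E12 m t * E21 m s) := by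
  have h3 : z s - z t ≠ 0 := sub_ne_zero.mpr hzst
  have hb1 : (z s / z t - 1)⁻¹ = z t / (z s - z t) := binv ht0 hzst
  have hb2 : (z s / z t - 1)⁻¹ * (z s / z t) = 1 + z t / (z s - z t) := by
    rw [hb1]
    field_simp
    ring
  unfold rOp Om12 Om21
  rw [Om0_eq, E21_E12_comm m hst, hb1]
  match_scalars <;> (field_simp; try ring)

lemma Kop_eq (s : Fin n) :
    Kop m z μ s = μ • E11 m s + ∑ t ∈ Finset.univ.erase s, rOp m s t (z s / z t) := by
  unfold Kop
  rw [E22_eq]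
  congr 1
  rw [sub_neg_eq_add]
  module

end Aux3
section Aux4

lemma sum2_merge {β : Type*} [AddCommMonoid β] (F G : Fin n → Fin n → β) :
    (∑ s : Fin n, ∑ t ∈ Finset.univ.erase s, F s t)
      + (∑ s : Fin n, ∑ t ∈ Finset.univ.erase s, G s t)
      = ∑ s : Fin n, ∑ t ∈ Finset.univ.erase s, (F s t + G s t) := by
  rw [← Finset.sum_add_distrib]
  exact Finset.sum_congr rfl fun s _ => (Finset.sum_add_distrib).symm

lemma sum2_congr {β : Type*} [AddCommMonoid β] {F G : Fin n → Fin n → β}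
    (h : ∀ s t, t ≠ s → F s t = G s t) :
    (∑ s : Fin n, ∑ t ∈ Finset.univ.erase s, F s t)
      = ∑ s : Fin n, ∑ t ∈ Finset.univ.erase s, G s t :=
  Finset.sum_congr rfl fun s _ => Finset.sum_congr rfl fun t ht =>
    h s t (Finset.mem_erase.mp ht).1

variable (m : Fin n → ℕ) (z : Fin n → ℂ) (μ x : ℂ)

/-- canonical normal form of `(2πi)⁻² D₂(x)`. -/
def NF : Module.End ℂ (TV m) :=
  μ • Hop m z x - (μ^2/4) • (1 : Module.End ℂ (TV m))
  + ∑ s, (((wc z x s - wc z x s^2) * ((m s : ℂ) * ((m s : ℂ) + 2) / 4)) •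
        (1 : Module.End ℂ (TV m))
      + (-(4:ℂ)⁻¹) • (E11 m s * E11 m s))
  - ∑ s, ∑ t ∈ Finset.univ.erase s,
      ((wc z x s - 2⁻¹) * (wc z x t - 2⁻¹)) • (E11 m s * E11 m t)
  - ∑ s, ∑ t ∈ Finset.univ.erase s,
      (wc z x s * (wc z x t - 1)) • (E12 m s * E21 m t)

lemma D2_eq (hz0 : ∀ s, z s ≠ 0) (hx : ∀ s, x ≠ z s) :
    D2 m z μ x = ((2 * (Real.pi : ℂ) * I) ^ 2) • NF m z μ x := by
  have hAA : Hop m z x * Hop m z x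
      = ∑ s, ∑ t, ((wc z x s - 2⁻¹) * (wc z x t - 2⁻¹)) • (E11 m s * E11 m t) := by
    unfold Hop
    rw [Finset.sum_mul_sum]
    exact Finset.sum_congr rfl fun s _ => Finset.sum_congr rfl fun t _ =>
      smul_mul_smul_comm _ _ _ _
  have hGG : (Hop m z x - (μ/2) • 1) * (Hop m z x - (μ/2) • 1)
      = (∑ s, ∑ t, ((wc z x s - 2⁻¹) * (wc z x t - 2⁻¹)) • (E11 m s * E11 m t))
          - μ • Hop m z x + (μ^2/4) • 1 := by
    conv_lhs => rw [sub_mul, mul_sub, mul_sub, mul_smul_comm, smul_mul_assoc,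
      smul_mul_assoc, mul_one, one_mul, one_mul]
    rw [hAA]
    module
  have hQQ : (∑ s, wc z x s • E12 m s) * (∑ t, (wc z x t - 1) • E21 m t)
      = ∑ s, ∑ t, (wc z x s * (wc z x t - 1)) • (E12 m s * E21 m t) := by
    rw [Finset.sum_mul_sum]
    exact Finset.sum_congr rfl fun s _ => Finset.sum_congr rfl fun t _ =>
      smul_mul_smul_comm _ _ _ _
  have e1 : (-(((Real.pi : ℂ) * I * μ)) • (1 : Module.End ℂ (TV m)) + M11 m z x)
      = (2 * (Real.pi : ℂ) * I) • (Hop m z x - (μ/2) • 1) := by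
    rw [M11_eq]; module
  have e2 : ((((Real.pi : ℂ) * I * μ)) • (1 : Module.End ℂ (TV m)) + M22 m z x)
      = (-(2 * (Real.pi : ℂ) * I)) • (Hop m z x - (μ/2) • 1) := by
    rw [M22_eq, M11_eq]; module
  unfold D2
  rw [e1, e2, M22d_eq m z x hz0 hx, M21_eq, M12_eq, smul_mul_smul_comm,
    smul_mul_smul_comm, hGG, hQQ]
  unfold NF
  rw [sum_split_diag (fun s t => ((wc z x s - 2⁻¹) * (wc z x t - 2⁻¹)) • (E11 m s * E11 m t)),
    sum_split_diag (fun s t => (wc z x s * (wc z x t - 1)) • (E12 m s * E21 m t))]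
  have h1 : ∑ s, (wc z x s^2 - wc z x s) • E11 m s
      - ∑ s, ((wc z x s - 2⁻¹) * (wc z x s - 2⁻¹)) • (E11 m s * E11 m s)
      - ∑ s, (wc z x s * (wc z x s - 1)) • (E12 m s * E21 m s)
      = ∑ s, (((wc z x s - wc z x s^2) * ((m s : ℂ) * ((m s : ℂ) + 2) / 4)) •
            (1 : Module.End ℂ (TV m))
          + (-(4:ℂ)⁻¹) • (E11 m s * E11 m s)) := by
    rw [← Finset.sum_sub_distrib, ← Finset.sum_sub_distrib]
    refine Finset.sum_congr rfl fun s _ => ?_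
    rw [casimir]
    match_scalars <;> ring
  rw [← h1]
  module

end Aux4
section Aux5

variable (m : Fin n → ℕ) (z : Fin n → ℂ) (μ x : ℂ)

set_option maxHeartbeats 2000000 in
lemma rhs_eq (hz0 : ∀ s, z s ≠ 0) (hx : ∀ s, x ≠ z s) (hz : Function.Injective z) :
    -(4:ℂ)⁻¹ • (μ ^ 2 • (1 : Module.End ℂ (TV m)) + μ • (e11T m - e22T m)
        - e11T m * e22T m)
      + ∑ s, (wc z x s • (((m s : ℂ) * ((m s : ℂ) + 2) / 4) • (1 : Module.End ℂ (TV m))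
            + Kop m z μ s)
          - (wc z x s ^ 2 * ((m s : ℂ) * ((m s : ℂ) + 2) / 4)) • (1 : Module.End ℂ (TV m)))
      = NF m z μ x := by
  have hzz : ∀ {s t : Fin n}, t ≠ s → z s ≠ z t := fun {s t} h he => h (hz he).symm
  -- expand the summand over s
  have hsum : ∀ s : Fin n,
      wc z x s • (((m s : ℂ) * ((m s : ℂ) + 2) / 4) • (1 : Module.End ℂ (TV m))
            + Kop m z μ s)
          - (wc z x s ^ 2 * ((m s : ℂ) * ((m s : ℂ) + 2) / 4)) • (1 : Module.End ℂ (TV m))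
        = ((wc z x s - wc z x s^2) * ((m s : ℂ) * ((m s : ℂ) + 2) / 4)) •
              (1 : Module.End ℂ (TV m))
            + (μ * wc z x s) • E11 m s
            + ∑ t ∈ Finset.univ.erase s,
                ((wc z x s * (1 + 2 * (z t / (z s - z t)))) • (E11 m s * E11 m t)
                  + (wc z x s * (1 + z t / (z s - z t))) • (E12 m s * E21 m t)
                  + (wc z x s * (z t / (z s - z t))) • (E12 m t * E21 m s)) := by
    intro s
    rw [Kop_eq]
    rw [smul_add, smul_add, Finset.smul_sum]
    have h7 : ∀ t ∈ Finset.univ.erase s,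
        wc z x s • rOp m s t (z s / z t)
          = (wc z x s * (1 + 2 * (z t / (z s - z t)))) • (E11 m s * E11 m t)
            + (wc z x s * (1 + z t / (z s - z t))) • (E12 m s * E21 m t)
            + (wc z x s * (z t / (z s - z t))) • (E12 m t * E21 m s) := by
      intro t ht
      have hts : t ≠ s := (Finset.mem_erase.mp ht).1
      rw [rOp_eq m z hts.symm (hz0 t) (hzz hts), smul_add, smul_add, smul_smul,
        smul_smul, smul_smul]
    rw [Finset.sum_congr rfl h7]
    module
  rw [Finset.sum_congr rfl (fun s _ => hsum s)]
  -- head expansion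
  have hhead : -(4:ℂ)⁻¹ • (μ ^ 2 • (1 : Module.End ℂ (TV m)) + μ • (e11T m - e22T m)
        - e11T m * e22T m)
      = -((μ^2/4) • (1 : Module.End ℂ (TV m))) + ∑ s, (-(μ/2)) • E11 m s
        + ∑ s, ∑ t, (-(4:ℂ)⁻¹) • (E11 m s * E11 m t) := by
    have he2 : e22T m = (-1 : ℂ) • e11T m := by rw [e22T_eq]; module
    rw [he2, mul_smul_comm]
    unfold e11T
    rw [Finset.sum_mul_sum]
    simp only [← Finset.smul_sum]
    module
  rw [hhead]
  rw [sum_split_diag (fun s t => (-(4:ℂ)⁻¹) • (E11 m s * E11 m t))]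
  simp only [Finset.sum_add_distrib]
  -- the μ part
  have hmu : μ • Hop m z x
      = ∑ s, (μ * wc z x s) • E11 m s + ∑ s, (-(μ/2)) • E11 m s := by
    unfold Hop
    rw [Finset.smul_sum, ← Finset.sum_add_distrib]
    refine Finset.sum_congr rfl fun s _ => ?_
    match_scalars
    ring
  -- the off-diagonal P part, by symmetrization
  have hP : ∑ s, ∑ t ∈ Finset.univ.erase s,
        (wc z x s * (1 + 2 * (z t / (z s - z t)))) • (E11 m s * E11 m t)
      = ∑ s, ∑ t ∈ Finset.univ.erase s,
        ((4:ℂ)⁻¹ - (wc z x s - 2⁻¹) * (wc z x t - 2⁻¹)) • (E11 m s * E11 m t) := by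
    refine smul_right_injective (Module.End ℂ (TV m)) (two_ne_zero (α := ℂ)) ?_
    show (2:ℂ) • _ = (2:ℂ) • _
    rw [two_smul]
    nth_rewrite 2 [sum_erase_swap
      (fun s t => (wc z x s * (1 + 2 * (z t / (z s - z t)))) • (E11 m s * E11 m t))]
    rw [sum2_merge]
    simp only [Finset.smul_sum]
    refine sum2_congr fun s t hts => ?_
    rw [E11_comm m t s]
    have hk := keyId (z := z) (x := x) (hz0 s) (hz0 t) (hx s) (hx t) (hzz hts)
    match_scalars
    linear_combination 2 * hk
  -- the Q part, by reindexing
  have hQswap : ∑ s, ∑ t ∈ Finset.univ.erase s,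
        (wc z x s * (z t / (z s - z t))) • (E12 m t * E21 m s)
      = ∑ s, ∑ t ∈ Finset.univ.erase s,
        (wc z x t * (z s / (z t - z s))) • (E12 m s * E21 m t) :=
    sum_erase_swap (fun s t => (wc z x s * (z t / (z s - z t))) • (E12 m t * E21 m s))
  have hQ : ∑ s, ∑ t ∈ Finset.univ.erase s,
        (wc z x s * (wc z x t - 1)) • (E12 m s * E21 m t)
      = -((∑ s, ∑ t ∈ Finset.univ.erase s,
            (wc z x s * (1 + z t / (z s - z t))) • (E12 m s * E21 m t))
        + ∑ s, ∑ t ∈ Finset.univ.erase s,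
            (wc z x s * (z t / (z s - z t))) • (E12 m t * E21 m s)) := by
    rw [hQswap, sum2_merge, ← Finset.sum_neg_distrib]
    refine Finset.sum_congr rfl fun s _ => ?_
    rw [← Finset.sum_neg_distrib]
    refine Finset.sum_congr rfl fun t ht => ?_
    have hts : t ≠ s := (Finset.mem_erase.mp ht).1
    have hk := keyId (z := z) (x := x) (hz0 s) (hz0 t) (hx s) (hx t) (hzz hts)
    match_scalars
    linear_combination hk
  -- the off-diagonal P part of NF
  have hPfin : ∑ s, ∑ t ∈ Finset.univ.erase s,
        ((wc z x s - 2⁻¹) * (wc z x t - 2⁻¹)) • (E11 m s * E11 m t)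
      = -((∑ s, ∑ t ∈ Finset.univ.erase s,
            (-(4:ℂ)⁻¹) • (E11 m s * E11 m t))
        + ∑ s, ∑ t ∈ Finset.univ.erase s,
            (wc z x s * (1 + 2 * (z t / (z s - z t)))) • (E11 m s * E11 m t)) := by
    rw [hP, sum2_merge, ← Finset.sum_neg_distrib]
    refine Finset.sum_congr rfl fun s _ => ?_
    rw [← Finset.sum_neg_distrib]
    refine Finset.sum_congr rfl fun t ht => ?_
    match_scalars
    ring
  unfold NF
  rw [hmu, hPfin, hQ, Finset.sum_add_distrib]
  generalize (∑ s, (((wc z x s - wc z x s^2) * ((m s : ℂ) * ((m s : ℂ) + 2) / 4)) •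
      (1 : Module.End ℂ (TV m)))) = W
  abel
end Aux5

/-- Theorem 4.1 of the paper.  For every `x ∈ ℂ∖{z_1,…,z_n}`:
(i) `D₁(x) = M₁₁(x) + M₂₂(x) = 0` on `V`, and (ii)
`(2πi)⁻² D₂(x) = -(μ² + μ(e11-e22) - e11 e22)/4
+ Σ_s [ (m_s(m_s+2)/4 + K_s(z,μ))/(1-x/z_s) - (m_s(m_s+2)/4)/(1-x/z_s)² ]` on `V`. -/
theorem statement1
    (n : ℕ) (hn : 1 < n) (m : Fin n → ℕ) (hm : ∀ s, 0 < m s)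
    (z : Fin n → ℂ) (hz0 : ∀ s, z s ≠ 0) (hz : Function.Injective z)
    (μ : ℂ) (x : ℂ) (hx : ∀ s, x ≠ z s) :
    M11 m z x + M22 m z x = 0 ∧
    ((2 * (Real.pi : ℂ) * Complex.I) ^ 2)⁻¹ • D2 m z μ x
      = -(4 : ℂ)⁻¹ • (μ ^ 2 • (1 : Module.End ℂ (TV m)) + μ • (e11T m - e22T m)
            - e11T m * e22T m)
        + ∑ s, ((1 - x / z s)⁻¹ • (((m s : ℂ) * ((m s : ℂ) + 2) / 4) • (1 : Module.End ℂ (TV m))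
              + Kop m z μ s)
            - (((1 - x / z s)⁻¹) ^ 2 * ((m s : ℂ) * ((m s : ℂ) + 2) / 4)) •
              (1 : Module.End ℂ (TV m))) := by
  constructor
  · exact M11_add_M22 m z x
  · have hwc : ∀ s : Fin n, (1 - x / z s)⁻¹ = wc z x s := fun s => rfl
    have ha : (2 * (Real.pi : ℂ) * I) ≠ 0 :=
      mul_ne_zero (mul_ne_zero two_ne_zero (Complex.ofReal_ne_zero.mpr Real.pi_ne_zero))
        I_ne_zero
    have hA2 : ((2 * (Real.pi : ℂ) * I) ^ 2) ≠ 0 := pow_ne_zero _ ha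
    simp only [hwc]
    rw [D2_eq m z μ x hz0 hx, inv_smul_smul₀ hA2]
    exact (rhs_eq m z μ x hz0 hx hz).symm


end
end Paper
end

section
/- Let t⁰ = (t⁰_1,…,t⁰_m) be a solution of the Bethe ansatz equations for the triple (z; μ; V[ν]), ν = M − 2m. Define g(x) = −(μ+ν/2)/2 + Σ_{i=1}^m t⁰_i/(x − t⁰_i) − (1/2)·Σ_{s=1}^n m_s·z_s/(x − z_s). Then for every x ∈ ℂ with x ∉ {t⁰_1,…,t⁰_m, z_1,…,z_n}: −(μ+ν/2)²/4 + Σ_{s=1}^n [ (m_s(m_s+2)/4 + k_s(t⁰,z,μ))/(1 − x/z_s) − (m_s(m_s+2)/4)/(1 − x/z_s)² ] = −x·g′(x) − g(x)², where g′(x) = −Σ_{i=1}^m t⁰_i/(x − t⁰_i)² + (1/2)·Σ_{s=1}^n m_s·z_s/(x − z_s)² and k_s(t⁰,z,μ) = (m_s/2)·[(μ − ν/2 + m_s/2) + Σ_{p≠s} m_p·z_s/(z_s − z_p) + 2·Σ_{i=1}^m z_s/(t⁰_i − z_s)]. (This is the identity E_2 = −(ln w)″ − ((ln w)′)² of Theorem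 6.1, with ′ = ∂_u = −2πi·x·∂_x and w(x) = Π_i(x−t⁰_i)·x^{(ν/2−μ)/2}·Π_s(x−z_s)^{−m_s/2}, for which (ln w)′ = −2πi·g(x).) -/
open Complex Finset

namespace Paper

noncomputable section

variable {n : ℕ}

variable (m : Fin n → ℕ)

/-- Swapping the two indices in an off-diagonal double sum. -/
lemma sum_erase_swap_s7 {α : Type*} [Fintype α] [DecidableEq α] (φ : α → α → ℂ) :
    ∑ i, ∑ j ∈ Finset.univ.erase i, φ j i = ∑ i, ∑ j ∈ Finset.univ.erase i, φ i j := by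
  rw [Finset.sum_comm' (s' := fun j => Finset.univ.erase j) (t' := Finset.univ)
    (fun a b => by simp [Finset.mem_erase, ne_comm])]

set_option maxHeartbeats 2000000 in
/-- the computational core of Theorem 6.1 of the paper: the identity
`E₂ = -(ln w)'' - ((ln w)')²` with `' = ∂_u = -2πi x ∂_x` and
`w(x) = Π_i (x-t⁰_i) x^{(ν/2-μ)/2} Π_s (x-z_s)^{-m_s/2}`, for which `(ln w)' = -2πi g(x)`,
written out for the function `g(x) = -(μ+ν/2)/2 + Σ_i t⁰_i/(x-t⁰_i) - ½Σ_s m_s z_s/(x-z_s)`. -/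
theorem statement7
    (n : ℕ) (hn : 1 < n) (m : Fin n → ℕ) (hm : ∀ s, 0 < m s)
    (M : ℕ) (hM : M = ∑ s, m s)
    (z : Fin n → ℂ) (hz0 : ∀ s, z s ≠ 0) (hz : Function.Injective z)
    (μ : ℂ) (m' : ℕ) (ν : ℂ) (hν : ν = (M : ℂ) - 2 * (m' : ℂ))
    (t : Fin m' → ℂ) (ht : BAE m z μ t)
    (g g' : ℂ → ℂ)
    (hg : ∀ x, g x = -(μ + ν / 2) / 2 + (∑ i, t i / (x - t i))
        - (1 / 2) * ∑ s, (m s : ℂ) * z s / (x - z s))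
    (hg' : ∀ x, g' x = -(∑ i, t i / (x - t i) ^ 2)
        + (1 / 2) * ∑ s, (m s : ℂ) * z s / (x - z s) ^ 2) :
    ∀ x : ℂ, (∀ i, x ≠ t i) → (∀ s, x ≠ z s) →
      -(μ + ν / 2) ^ 2 / 4
        + ∑ s, (((m s : ℂ) * ((m s : ℂ) + 2) / 4 + kEig m z μ t s) / (1 - x / z s)
            - ((m s : ℂ) * ((m s : ℂ) + 2) / 4) / (1 - x / z s) ^ 2)
      = -x * g' x - (g x) ^ 2 := by
  intro x hxt hxz
  obtain ⟨hinj, ht0, htzne, hbae⟩ := ht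
  have hxt' : ∀ i, x - t i ≠ 0 := fun i => sub_ne_zero.mpr (hxt i)
  have hxz' : ∀ s, x - z s ≠ 0 := fun s => sub_ne_zero.mpr (hxz s)
  have htz' : ∀ i s, t i - z s ≠ 0 := fun i s => sub_ne_zero.mpr (htzne i s)
  have htt' : ∀ i j : Fin m', i ≠ j → t i - t j ≠ 0 := fun i j h =>
    sub_ne_zero.mpr fun hh => h (hinj hh)
  have hzz' : ∀ s p : Fin n, s ≠ p → z s - z p ≠ 0 := fun s p h =>
    sub_ne_zero.mpr fun hh => h (hz hh)
  have h1xz : ∀ s, (1 : ℂ) - x / z s ≠ 0 := by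
    intro s h
    exact hxz s ((div_eq_one_iff_eq (hz0 s)).mp (sub_eq_zero.mp h).symm)
  have hMc : (M : ℂ) = ∑ s, (m s : ℂ) := by rw [hM]; push_cast; rfl
  rw [hg x, hg' x]
  -- normal forms of the simple sums
  have hTa : (∑ i, t i / (x - t i)) = ∑ i, t i * (x - t i)⁻¹ := by
    simp only [div_eq_mul_inv]
  have hSb : (∑ s, (m s : ℂ) * z s / (x - z s)) = ∑ s, (m s : ℂ) * z s * (x - z s)⁻¹ := by
    simp only [div_eq_mul_inv]
  have hT2 : x * ∑ i, t i / (x - t i) ^ 2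
      = (∑ i, t i * (x - t i)⁻¹) + ∑ i, (t i * (x - t i)⁻¹) ^ 2 := by
    rw [Finset.mul_sum, ← Finset.sum_add_distrib]
    refine Finset.sum_congr rfl fun i _ => ?_
    have h := hxt' i
    field_simp
    ring
  have hS2 : x * ∑ s, (m s : ℂ) * z s / (x - z s) ^ 2
      = (∑ s, (m s : ℂ) * z s * (x - z s)⁻¹)
        + ∑ s, (m s : ℂ) * z s ^ 2 * ((x - z s)⁻¹) ^ 2 := by
    rw [Finset.mul_sum, ← Finset.sum_add_distrib]
    refine Finset.sum_congr rfl fun s _ => ?_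
    have h := hxz' s
    field_simp
    ring
  -- normal form of the left-hand sum
  have hL : (∑ s, (((m s : ℂ) * ((m s : ℂ) + 2) / 4 + kEig m z μ t s) / (1 - x / z s)
          - ((m s : ℂ) * ((m s : ℂ) + 2) / 4) / (1 - x / z s) ^ 2))
      = -(∑ s, ((m s : ℂ) * ((m s : ℂ) + 2) / 4 + kEig m z μ t s) * z s * (x - z s)⁻¹)
        - ∑ s, (m s : ℂ) * ((m s : ℂ) + 2) / 4 * z s ^ 2 * ((x - z s)⁻¹) ^ 2 := by
    rw [← Finset.sum_neg_distrib, ← Finset.sum_sub_distrib]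
    refine Finset.sum_congr rfl fun s _ => ?_
    have h1 := hz0 s; have h2 := hxz' s; have h3 := h1xz s
    have hinv : (1 - x * (z s)⁻¹)⁻¹ = -(z s * (x - z s)⁻¹) := by
      refine inv_eq_of_mul_eq_one_right ?_
      field_simp
      ring
    simp only [div_eq_mul_inv, ← inv_pow]
    rw [hinv]
    ring
  -- T * T
  have hTT : (∑ i, t i * (x - t i)⁻¹) * (∑ i, t i * (x - t i)⁻¹)
      = (∑ i, (t i * (x - t i)⁻¹) ^ 2)
        + 2 * ∑ i, (x - t i)⁻¹ * ∑ j ∈ Finset.univ.erase i, t i * t j / (t i - t j) := by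
    rw [Finset.sum_mul_sum]
    have step1 : ∀ i : Fin m', (∑ j, (t i * (x - t i)⁻¹) * (t j * (x - t j)⁻¹))
        = (t i * (x - t i)⁻¹) ^ 2
          + ∑ j ∈ Finset.univ.erase i, (t i * (x - t i)⁻¹) * (t j * (x - t j)⁻¹) := by
      intro i
      rw [← Finset.add_sum_erase _ _ (Finset.mem_univ i), sq]
    rw [Finset.sum_congr rfl fun i _ => step1 i, Finset.sum_add_distrib]
    congr 1
    have step2 : ∀ i : Fin m', ∀ j ∈ Finset.univ.erase i,
        (t i * (x - t i)⁻¹) * (t j * (x - t j)⁻¹)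
        = (x - t i)⁻¹ * (t i * t j / (t i - t j)) + (x - t j)⁻¹ * (t j * t i / (t j - t i)) := by
      intro i j hj
      have hji : j ≠ i := (Finset.mem_erase.mp hj).1
      have h1 := htt' i j hji.symm
      have h2 := htt' j i hji
      have h3 := hxt' i
      have h4 := hxt' j
      field_simp
      ring
    rw [Finset.sum_congr rfl fun i _ => Finset.sum_congr rfl (step2 i)]
    simp only [Finset.sum_add_distrib]
    rw [sum_erase_swap_s7 (fun i j => (x - t i)⁻¹ * (t i * t j / (t i - t j)))]
    simp only [← Finset.mul_sum]
    ring
  -- S * S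
  have hSS : (∑ s, (m s : ℂ) * z s * (x - z s)⁻¹) * (∑ s, (m s : ℂ) * z s * (x - z s)⁻¹)
      = (∑ s, ((m s : ℂ) * z s * (x - z s)⁻¹) ^ 2)
        + 2 * ∑ s, (x - z s)⁻¹ *
            ∑ p ∈ Finset.univ.erase s, (m s : ℂ) * (m p : ℂ) * z s * z p / (z s - z p) := by
    rw [Finset.sum_mul_sum]
    have step1 : ∀ s : Fin n, (∑ p, ((m s : ℂ) * z s * (x - z s)⁻¹) * ((m p : ℂ) * z p * (x - z p)⁻¹))
        = ((m s : ℂ) * z s * (x - z s)⁻¹) ^ 2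
          + ∑ p ∈ Finset.univ.erase s, ((m s : ℂ) * z s * (x - z s)⁻¹) * ((m p : ℂ) * z p * (x - z p)⁻¹) := by
      intro s
      rw [← Finset.add_sum_erase _ _ (Finset.mem_univ s), sq]
    rw [Finset.sum_congr rfl fun s _ => step1 s, Finset.sum_add_distrib]
    congr 1
    have step2 : ∀ s : Fin n, ∀ p ∈ Finset.univ.erase s,
        ((m s : ℂ) * z s * (x - z s)⁻¹) * ((m p : ℂ) * z p * (x - z p)⁻¹)
        = (x - z s)⁻¹ * ((m s : ℂ) * (m p : ℂ) * z s * z p / (z s - z p))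
          + (x - z p)⁻¹ * ((m p : ℂ) * (m s : ℂ) * z p * z s / (z p - z s)) := by
      intro s p hp
      have hps : p ≠ s := (Finset.mem_erase.mp hp).1
      have h1 := hzz' s p hps.symm
      have h2 := hzz' p s hps
      have h3 := hxz' s
      have h4 := hxz' p
      field_simp
      ring
    rw [Finset.sum_congr rfl fun s _ => Finset.sum_congr rfl (step2 s)]
    simp only [Finset.sum_add_distrib]
    rw [sum_erase_swap_s7 (fun s p => (x - z s)⁻¹ * ((m s : ℂ) * (m p : ℂ) * z s * z p / (z s - z p)))]
    simp only [← Finset.mul_sum]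
    ring
  -- T * S
  have hTS : (∑ i, t i * (x - t i)⁻¹) * (∑ s, (m s : ℂ) * z s * (x - z s)⁻¹)
      = (∑ i, (x - t i)⁻¹ * ∑ s, (m s : ℂ) * t i * z s / (t i - z s))
        - ∑ s, (x - z s)⁻¹ * ∑ i, (m s : ℂ) * t i * z s / (t i - z s) := by
    rw [Finset.sum_mul_sum]
    have step : ∀ (i : Fin m') (s : Fin n),
        (t i * (x - t i)⁻¹) * ((m s : ℂ) * z s * (x - z s)⁻¹)
        = (x - t i)⁻¹ * ((m s : ℂ) * t i * z s / (t i - z s))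
          - (x - z s)⁻¹ * ((m s : ℂ) * t i * z s / (t i - z s)) := by
      intro i s
      have h1 := hxt' i
      have h2 := hxz' s
      have h3 := htz' i s
      field_simp
      ring
    rw [Finset.sum_congr rfl fun i _ => Finset.sum_congr rfl fun s _ => step i s]
    simp only [Finset.sum_sub_distrib]
    congr 1
    · simp only [← Finset.mul_sum]
    · rw [Finset.sum_comm]
      simp only [← Finset.mul_sum]
  -- the Bethe ansatz equations kill the `1/(x - t i)` coefficients
  have hE6 : (1 + μ + ν / 2) * (∑ i, t i * (x - t i)⁻¹)
      - 2 * (∑ i, (x - t i)⁻¹ * ∑ j ∈ Finset.univ.erase i, t i * t j / (t i - t j))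
      + (∑ i, (x - t i)⁻¹ * ∑ s, (m s : ℂ) * t i * z s / (t i - z s)) = 0 := by
    rw [Finset.mul_sum, Finset.mul_sum, ← Finset.sum_sub_distrib, ← Finset.sum_add_distrib]
    refine Finset.sum_eq_zero fun i _ => ?_
    have hm1 : (1 : ℕ) ≤ m' := Nat.one_le_iff_ne_zero.mpr (by rintro rfl; exact i.elim0)
    have hcard : (((Finset.univ.erase i).card : ℕ) : ℂ) = (m' : ℂ) - 1 := by
      rw [Finset.card_erase_of_mem (Finset.mem_univ i), Finset.card_univ, Fintype.card_fin,
        Nat.cast_sub hm1]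
      norm_num
    have hp : 2 * (∑ j ∈ Finset.univ.erase i, t i * t j / (t i - t j))
        = (∑ j ∈ Finset.univ.erase i, 2 * t i ^ 2 * (t i - t j)⁻¹)
          - 2 * ((m' : ℂ) - 1) * t i := by
      rw [Finset.mul_sum]
      have hstep : ∀ j ∈ Finset.univ.erase i,
          2 * (t i * t j / (t i - t j)) = 2 * t i ^ 2 * (t i - t j)⁻¹ - 2 * t i := by
        intro j hj
        have h := htt' i j ((Finset.mem_erase.mp hj).1).symm
        field_simp
        ring
      rw [Finset.sum_congr rfl hstep, Finset.sum_sub_distrib, Finset.sum_const, nsmul_eq_mul,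
        hcard]
      ring
    have hr : (∑ s, (m s : ℂ) * t i * z s / (t i - z s))
        = (∑ s, (m s : ℂ) * t i ^ 2 * (t i - z s)⁻¹) - t i * ∑ s, (m s : ℂ) := by
      rw [Finset.mul_sum, ← Finset.sum_sub_distrib]
      refine Finset.sum_congr rfl fun s _ => ?_
      have h := htz' i s
      field_simp
      ring
    have h0 := hbae i
    have hdiv : (1 - μ + ((∑ s, (m s : ℂ)) - 2 * (m' : ℂ)) / 2) / t i * t i ^ 2
        = (1 - μ + ((∑ s, (m s : ℂ)) - 2 * (m' : ℂ)) / 2) * t i := by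
      have h := ht0 i
      field_simp
    have hj : (∑ j ∈ Finset.univ.erase i, 2 / (t i - t j)) * t i ^ 2
        = ∑ j ∈ Finset.univ.erase i, 2 * t i ^ 2 * (t i - t j)⁻¹ := by
      rw [Finset.sum_mul]
      refine Finset.sum_congr rfl fun j hj => ?_
      have h := htt' i j ((Finset.mem_erase.mp hj).1).symm
      field_simp
      try ring
    have hsz : (∑ s, (m s : ℂ) / (t i - z s)) * t i ^ 2
        = ∑ s, (m s : ℂ) * t i ^ 2 * (t i - z s)⁻¹ := by
      rw [Finset.sum_mul]
      refine Finset.sum_congr rfl fun s _ => ?_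
      have h := htz' i s
      field_simp
      try ring
    have hB2 : (1 - μ + ((∑ s, (m s : ℂ)) - 2 * (m' : ℂ)) / 2) * t i
        + (∑ j ∈ Finset.univ.erase i, 2 * t i ^ 2 * (t i - t j)⁻¹)
        - (∑ s, (m s : ℂ) * t i ^ 2 * (t i - z s)⁻¹) = 0 := by
      linear_combination t i ^ 2 * h0 - hdiv - hj + hsz
    linear_combination (-(x - t i)⁻¹) * hB2 - (x - t i)⁻¹ * hp + (x - t i)⁻¹ * hr
      + (t i * (x - t i)⁻¹ / 2) * hν + (t i * (x - t i)⁻¹ / 2) * hMc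
  -- the `1/(x - z s)` coefficients combine with `kEig`
  have hE7 : (-(μ + ν / 2) / 2 - 1 / 2) * (∑ s, (m s : ℂ) * z s * (x - z s)⁻¹)
      - (1 / 2) * (∑ s, (x - z s)⁻¹ *
          ∑ p ∈ Finset.univ.erase s, (m s : ℂ) * (m p : ℂ) * z s * z p / (z s - z p))
      - (∑ s, (x - z s)⁻¹ * ∑ i, (m s : ℂ) * t i * z s / (t i - z s))
      + (∑ s, ((m s : ℂ) * ((m s : ℂ) + 2) / 4 + kEig m z μ t s) * z s * (x - z s)⁻¹) = 0 := by
    rw [Finset.mul_sum, Finset.mul_sum, ← Finset.sum_sub_distrib, ← Finset.sum_sub_distrib,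
      ← Finset.sum_add_distrib]
    refine Finset.sum_eq_zero fun s _ => ?_
    have hq : (∑ p ∈ Finset.univ.erase s, (m s : ℂ) * (m p : ℂ) * z s * z p / (z s - z p))
        = (m s : ℂ) * z s * (∑ p ∈ Finset.univ.erase s, (m p : ℂ) * z s / (z s - z p))
          - (m s : ℂ) * z s * ((∑ p, (m p : ℂ)) - (m s : ℂ)) := by
      rw [← Finset.sum_erase_eq_sub (Finset.mem_univ s), Finset.mul_sum, Finset.mul_sum,
        ← Finset.sum_sub_distrib]
      refine Finset.sum_congr rfl fun p hp => ?_
      have h := hzz' s p ((Finset.mem_erase.mp hp).1).symm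
      field_simp
      ring
    have hr' : (∑ i, (m s : ℂ) * t i * z s / (t i - z s))
        = (m s : ℂ) * z s * (∑ i, z s / (t i - z s)) + (m s : ℂ) * z s * (m' : ℂ) := by
      have hstep : ∀ i : Fin m', (m s : ℂ) * t i * z s / (t i - z s)
          = (m s : ℂ) * z s * (z s / (t i - z s)) + (m s : ℂ) * z s := by
        intro i
        have h := htz' i s
        field_simp
        ring
      rw [Finset.sum_congr rfl fun i _ => hstep i, Finset.sum_add_distrib, Finset.sum_const,
        Finset.card_univ, Fintype.card_fin, nsmul_eq_mul, Finset.mul_sum]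
      ring
    have hk : kEig m z μ t s = ((m s : ℂ) / 2) *
        ((μ - ((∑ u, (m u : ℂ)) - 2 * (m' : ℂ)) / 2 + (m s : ℂ) / 2)
          + (∑ p ∈ Finset.univ.erase s, (m p : ℂ) * z s / (z s - z p))
          + 2 * ∑ i, z s / (t i - z s)) := rfl
    rw [hk]
    linear_combination (-(1 / 2) * (x - z s)⁻¹) * hq - (x - z s)⁻¹ * hr'
      - ((m s : ℂ) * z s * (x - z s)⁻¹ / 4) * hMc - ((m s : ℂ) * z s * (x - z s)⁻¹ / 4) * hν
  -- the square coefficients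
  have hE8 : (∑ s, (m s : ℂ) * ((m s : ℂ) + 2) / 4 * z s ^ 2 * ((x - z s)⁻¹) ^ 2)
      = (1 / 2) * (∑ s, (m s : ℂ) * z s ^ 2 * ((x - z s)⁻¹) ^ 2)
        + (1 / 4) * ∑ s, ((m s : ℂ) * z s * (x - z s)⁻¹) ^ 2 := by
    rw [Finset.mul_sum, Finset.mul_sum, ← Finset.sum_add_distrib]
    refine Finset.sum_congr rfl fun s _ => ?_
    ring
  rw [hTa, hSb, hL]
  linear_combination -hT2 + (1 / 2) * hS2 + hTT + (1 / 4) * hSS - hTS - hE6 - hE7 - hE8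



end
end Paper
end

section
/- Let t⁰ = (t⁰_1,…,t⁰_m) be a solution of the Bethe ansatz equations for the triple (z; μ; V[ν]), ν = M − 2m, and let E_2(x) = (2πi)²·[ −(μ+ν/2)²/4 + Σ_{s=1}^n ( (m_s(m_s+2)/4 + k_s(t⁰,z,μ))/(1 − x/z_s) − (m_s(m_s+2)/4)/(1 − x/z_s)² ) ]. Let U ⊆ ℂ∖({0} ∪ {t⁰_1,…,t⁰_m} ∪ {z_1,…,z_n}) be open and let w : U → ℂ be a holomorphic nowhere-vanishing function whose logarithmic derivative is w′(x)/w(x) = (ν/2 − μ)/(2x) + Σ_{i=1}^m 1/(x − t⁰_i) − Σ_{s=1}^n (m_s/2)/(x − z_s) (i.e. w is a branch of Π_i(x−t⁰_i)·x^{(ν/2−μ)/2}·Π_s(x−z_s)^{−m_s/2}). Then w lies in the kernel of the fundamental differential operator ∂_u² + E_2: for all x ∈ U, (2πi)²·(x²·w″(x) + x·w′(x)) + E_2(x)·w(x) = 0, where ∂_u = −2πi·x·∂_x. -/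
open Complex Finset

namespace Paper

noncomputable section

variable {n : ℕ}

variable (m : Fin n → ℕ)

private lemma sum_swap_erase {N : ℕ} (f : Fin N → Fin N → ℂ) :
    ∑ i, ∑ j ∈ univ.erase i, f i j = ∑ i, ∑ j ∈ univ.erase i, f j i :=
  Finset.sum_comm' (fun i j => by simp [eq_comm, ne_comm, and_comm])

private lemma pf1 {x p : ℂ} (hxp : x ≠ p) : x * (1/(x - p)) = 1 + p/(x - p) := by
  have h1 : x - p ≠ 0 := sub_ne_zero.mpr hxp
  field_simp
  ring

private lemma pf2 {x p q : ℂ} (hxp : x ≠ p) (hxq : x ≠ q) (hpq : p ≠ q) :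
    x^2 * (1/(x - p) * (1/(x - q)))
      = 1 + p^2*((1/(p - q))*(1/(x - p))) + q^2*((1/(q - p))*(1/(x - q))) := by
  have h1 : x - p ≠ 0 := sub_ne_zero.mpr hxp
  have h2 : x - q ≠ 0 := sub_ne_zero.mpr hxq
  have h3 : p - q ≠ 0 := sub_ne_zero.mpr hpq
  have h4 : q - p ≠ 0 := sub_ne_zero.mpr hpq.symm
  field_simp
  ring

private lemma pf3 {x p : ℂ} (hxp : x ≠ p) :
    x^2 * (1/(x - p)^2) = 1 + 2*(p/(x - p)) + p^2/(x - p)^2 := by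
  have h1 : x - p ≠ 0 := sub_ne_zero.mpr hxp
  field_simp
  ring

set_option maxHeartbeats 3200000 in
private lemma scalar_key {m' N : ℕ} (x a : ℂ) (t : Fin m' → ℂ) (z : Fin N → ℂ)
    (c k : Fin N → ℂ)
    (hx0 : x ≠ 0) (hxt : ∀ i, x ≠ t i) (hxz : ∀ s, x ≠ z s)
    (ht0 : ∀ i, t i ≠ 0) (htz : ∀ i s, t i ≠ z s)
    (htinj : Function.Injective t) (hzinj : Function.Injective z)
    (hk : ∀ s, k s = c s * ((c s - 2*a)
        + 2 * (∑ p ∈ univ.erase s, c p * (z s / (z s - z p)))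
        + 2 * ∑ i, z s / (t i - z s)))
    (hBAE : ∀ i, (2*a+1) / t i + (∑ j ∈ univ.erase i, 2/(t i - t j))
        - (∑ s, 2 * c s / (t i - z s)) = 0) :
    x^2 * (-(a/x^2) - (∑ i, 1/(x - t i)^2) + ∑ s, c s * (1/(x - z s)^2))
      + x^2 * (a/x + (∑ i, 1/(x - t i)) - ∑ s, c s * (1/(x - z s)))^2
      + x * (a/x + (∑ i, 1/(x - t i)) - ∑ s, c s * (1/(x - z s)))
    = (a + m' - ∑ s, c s)^2
      + (∑ s, (c s * (c s + 1) + k s) * (z s / (x - z s)))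
      + ∑ s, c s * (c s + 1) * (z s^2 / (x - z s)^2) := by
  have hxt' : ∀ i, x - t i ≠ 0 := fun i => sub_ne_zero.mpr (hxt i)
  have hxz' : ∀ s, x - z s ≠ 0 := fun s => sub_ne_zero.mpr (hxz s)
  set S1 := ∑ i, 1/(x - t i) with hS1
  set S1' := ∑ i, 1/(x - t i)^2 with hS1'
  set S2 := ∑ s, c s * (1/(x - z s)) with hS2
  set S2' := ∑ s, c s * (1/(x - z s)^2) with hS2'
  have e1 : x^2 * (-(a/x^2) - S1' + S2') + x^2 * (a/x + S1 - S2)^2 + x * (a/x + S1 - S2)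
      = a^2 + (x^2*S1^2 - x^2*S1') - 2*(x^2*(S1*S2)) + (x^2*S2^2 + x^2*S2')
        + (2*a+1)*(x*S1) - (2*a+1)*(x*S2) := by
    field_simp
    ring
  have h1 : x * S1 = (m' : ℂ) + ∑ i, t i/(x - t i) := by
    rw [hS1, Finset.mul_sum,
      Finset.sum_congr rfl (fun i (_ : i ∈ univ) => pf1 (hxt i)),
      Finset.sum_add_distrib, Finset.sum_const, card_univ, Fintype.card_fin,
      nsmul_eq_mul, mul_one]
  have h2 : x * S2 = (∑ s, c s) + ∑ s, c s * (z s/(x - z s)) := by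
    rw [hS2, Finset.mul_sum,
      Finset.sum_congr rfl (fun s (_ : s ∈ univ) =>
        (by linear_combination c s * pf1 (hxz s) :
          x * (c s * (1/(x - z s))) = c s + c s * (z s/(x - z s)))),
      Finset.sum_add_distrib]
  -- h3 : t-pole double sum
  have h3 : x^2*S1^2 - x^2*S1'
      = (m' : ℂ)*((m' : ℂ) - 1)
        + 2*∑ i, (t i^2 * ∑ j ∈ univ.erase i, 1/(t i - t j)) * (1/(x - t i)) := by
    have e2 : x^2 * S1^2 - x^2 * S1'
        = ∑ i, ∑ j ∈ univ.erase i, x^2 * (1/(x - t i) * (1/(x - t j))) := by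
      rw [hS1, hS1', pow_two (∑ i, 1/(x - t i)), Finset.sum_mul_sum, Finset.mul_sum,
        Finset.mul_sum, ← Finset.sum_sub_distrib]
      refine Finset.sum_congr rfl fun i _ => ?_
      have hd := Finset.add_sum_erase univ (fun j => 1/(x - t i) * (1/(x - t j))) (mem_univ i)
      have hmul : (∑ j ∈ univ.erase i, x^2 * (1/(x - t i) * (1/(x - t j))))
          = x^2 * ∑ j ∈ univ.erase i, 1/(x - t i) * (1/(x - t j)) := by rw [Finset.mul_sum]
      have hsq : 1/(x - t i)^2 = 1/(x - t i) * (1/(x - t i)) := by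
        rw [pow_two, div_mul_div_comm, one_mul]
      linear_combination (-(x^2))*hd - hmul - x^2*hsq
    have e3 : (∑ i, ∑ j ∈ univ.erase i, x^2 * (1/(x - t i) * (1/(x - t j))))
        = ∑ i, ∑ j ∈ univ.erase i,
            ((1 : ℂ) + (t i)^2*((1/(t i - t j))*(1/(x - t i)))
              + (t j)^2*((1/(t j - t i))*(1/(x - t j)))) :=
      Finset.sum_congr rfl fun i _ => Finset.sum_congr rfl fun j hj =>
        pf2 (hxt i) (hxt j) (htinj.ne (Ne.symm (Finset.mem_erase.mp hj).1))
    have e4 : (∑ i, ∑ j ∈ univ.erase i,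
            ((1 : ℂ) + (t i)^2*((1/(t i - t j))*(1/(x - t i)))
              + (t j)^2*((1/(t j - t i))*(1/(x - t j)))))
        = (∑ i : Fin m', ∑ j ∈ univ.erase i, (1:ℂ))
          + (∑ i, ∑ j ∈ univ.erase i, (t i)^2*((1/(t i - t j))*(1/(x - t i))))
          + (∑ i, ∑ j ∈ univ.erase i, (t j)^2*((1/(t j - t i))*(1/(x - t j)))) := by
      simp [Finset.sum_add_distrib]
    have c1 : (∑ i : Fin m', ∑ j ∈ univ.erase i, (1:ℂ)) = (m':ℂ)*((m':ℂ)-1) := by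
      have hce : ∀ i : Fin m', (∑ j ∈ univ.erase i, (1:ℂ)) = (m':ℂ) - 1 := fun i => by
        rw [Finset.sum_const, Finset.card_erase_of_mem (mem_univ i), card_univ,
          Fintype.card_fin, nsmul_eq_mul, mul_one, Nat.cast_sub i.pos, Nat.cast_one]
      rw [Finset.sum_congr rfl fun i _ => hce i, Finset.sum_const, card_univ,
        Fintype.card_fin, nsmul_eq_mul]
    have c3 : (∑ i, ∑ j ∈ univ.erase i, (t j)^2*((1/(t j - t i))*(1/(x - t j))))
        = ∑ i, ∑ j ∈ univ.erase i, (t i)^2*((1/(t i - t j))*(1/(x - t i))) :=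
      sum_swap_erase (fun i j => (t j)^2*((1/(t j - t i))*(1/(x - t j))))
    have c2 : (∑ i, ∑ j ∈ univ.erase i, (t i)^2*((1/(t i - t j))*(1/(x - t i))))
        = ∑ i, (t i^2 * ∑ j ∈ univ.erase i, 1/(t i - t j)) * (1/(x - t i)) := by
      refine Finset.sum_congr rfl fun i _ => ?_
      rw [Finset.mul_sum, Finset.sum_mul]
      exact Finset.sum_congr rfl fun j _ => by ring
    linear_combination e2 + e3 + e4 + c1 + c3 + 2*c2
  -- h4 : mixed double sum
  have h4 : x^2*(S1*S2) = (m':ℂ)*(∑ s, c s)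
      + (∑ i, (t i^2 * ∑ s, c s * (1/(t i - z s)))*(1/(x - t i)))
      + ∑ s, (c s * z s^2 * ∑ i, 1/(z s - t i))*(1/(x - z s)) := by
    have e2 : x^2*(S1*S2) = ∑ i, ∑ s, x^2*((1/(x - t i))*(c s*(1/(x - z s)))) := by
      rw [hS1, hS2, Finset.sum_mul_sum, Finset.mul_sum]
      exact Finset.sum_congr rfl fun i _ => by rw [Finset.mul_sum]
    have e3 : (∑ i, ∑ s, x^2*((1/(x - t i))*(c s*(1/(x - z s)))))
        = ∑ i, ∑ s, (c s + (t i^2*(c s*(1/(t i - z s))))*(1/(x - t i))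
            + (c s*z s^2*(1/(z s - t i)))*(1/(x - z s))) :=
      Finset.sum_congr rfl fun i _ => Finset.sum_congr rfl fun s _ => by
        linear_combination c s * pf2 (hxt i) (hxz s) (htz i s)
    have e4 : (∑ i, ∑ s, (c s + (t i^2*(c s*(1/(t i - z s))))*(1/(x - t i))
            + (c s*z s^2*(1/(z s - t i)))*(1/(x - z s))))
        = (∑ _i : Fin m', ∑ s, c s)
          + (∑ i, ∑ s, (t i^2*(c s*(1/(t i - z s))))*(1/(x - t i)))
          + ∑ i, ∑ s, (c s*z s^2*(1/(z s - t i)))*(1/(x - z s)) := by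
      simp [Finset.sum_add_distrib]
    have cA : (∑ _i : Fin m', ∑ s, c s) = (m':ℂ)*(∑ s, c s) := by
      rw [Finset.sum_const, card_univ, Fintype.card_fin, nsmul_eq_mul]
    have cB : (∑ i, ∑ s, (t i^2*(c s*(1/(t i - z s))))*(1/(x - t i)))
        = ∑ i, (t i^2 * ∑ s, c s * (1/(t i - z s)))*(1/(x - t i)) := by
      refine Finset.sum_congr rfl fun i _ => ?_
      rw [Finset.mul_sum, Finset.sum_mul]
    have cC : (∑ i, ∑ s, (c s*z s^2*(1/(z s - t i)))*(1/(x - z s)))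
        = ∑ s, (c s * z s^2 * ∑ i, 1/(z s - t i))*(1/(x - z s)) := by
      rw [Finset.sum_comm]
      refine Finset.sum_congr rfl fun s _ => ?_
      rw [Finset.mul_sum, Finset.sum_mul]
    linear_combination e2 + e3 + e4 + cA + cB + cC
  -- h5 : z-pole double sum
  have h5 : x^2*S2^2 + x^2*S2'
      = (∑ s, c s*(c s+1)) + ((∑ s, c s)^2 - ∑ s, (c s)^2)
        + 2*(∑ s, c s*(c s+1)*(z s/(x - z s)))
        + 2*(∑ s, (c s * z s^2 * ∑ p ∈ univ.erase s, c p * (1/(z s - z p)))*(1/(x - z s)))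
        + ∑ s, c s*(c s+1)*(z s^2/(x - z s)^2) := by
    have e0 : x^2*S2^2 + x^2*S2'
        = ∑ s, ((∑ p, x^2*((c s*(1/(x - z s)))*(c p*(1/(x - z p)))))
            + x^2*(c s*(1/(x - z s)^2))) := by
      rw [hS2, hS2', pow_two (∑ s, c s * (1/(x - z s))), Finset.sum_mul_sum,
        Finset.mul_sum, Finset.mul_sum, ← Finset.sum_add_distrib]
      refine Finset.sum_congr rfl fun s _ => ?_
      rw [Finset.mul_sum]
    have e1' : ∀ s ∈ (univ : Finset (Fin N)),
        ((∑ p, x^2*((c s*(1/(x - z s)))*(c p*(1/(x - z p)))))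
            + x^2*(c s*(1/(x - z s)^2)))
        = (c s*(c s+1) + 2*(c s*(c s+1)*(z s/(x - z s))) + c s*(c s+1)*(z s^2/(x - z s)^2))
          + ∑ p ∈ univ.erase s, (c s*c p
              + (c s*z s^2*(c p*(1/(z s - z p))))*(1/(x - z s))
              + (c p*z p^2*(c s*(1/(z p - z s))))*(1/(x - z p))) := by
      intro s _
      have hd := Finset.add_sum_erase univ
        (fun p => x^2*((c s*(1/(x - z s)))*(c p*(1/(x - z p))))) (mem_univ s)
      have hsq : 1/(x - z s)^2 = 1/(x - z s) * (1/(x - z s)) := by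
        rw [pow_two, div_mul_div_comm, one_mul]
      have hcongr : (∑ p ∈ univ.erase s, x^2*((c s*(1/(x - z s)))*(c p*(1/(x - z p)))))
          = ∑ p ∈ univ.erase s, (c s*c p
              + (c s*z s^2*(c p*(1/(z s - z p))))*(1/(x - z s))
              + (c p*z p^2*(c s*(1/(z p - z s))))*(1/(x - z p))) := by
        refine Finset.sum_congr rfl fun p hp => ?_
        have hzz : z s ≠ z p := hzinj.ne (Ne.symm (Finset.mem_erase.mp hp).1)
        linear_combination (c s*c p) * pf2 (hxz s) (hxz p) hzz
      linear_combination (c s*(c s+1)) * pf3 (hxz s) + hcongr - hd - (c s^2*x^2)*hsq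
    have e2' : (∑ s, ((c s*(c s+1) + 2*(c s*(c s+1)*(z s/(x - z s)))
            + c s*(c s+1)*(z s^2/(x - z s)^2))
          + ∑ p ∈ univ.erase s, (c s*c p
              + (c s*z s^2*(c p*(1/(z s - z p))))*(1/(x - z s))
              + (c p*z p^2*(c s*(1/(z p - z s))))*(1/(x - z p)))))
        = ((∑ s, c s*(c s+1)) + (∑ s, 2*(c s*(c s+1)*(z s/(x - z s))))
          + (∑ s, c s*(c s+1)*(z s^2/(x - z s)^2)))
          + ((∑ s, ∑ p ∈ univ.erase s, (c s*c p : ℂ))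
            + (∑ s, ∑ p ∈ univ.erase s, (c s*z s^2*(c p*(1/(z s - z p))))*(1/(x - z s)))
            + ∑ s, ∑ p ∈ univ.erase s, (c p*z p^2*(c s*(1/(z p - z s))))*(1/(x - z p))) := by
      simp [Finset.sum_add_distrib]
    have cconst : (∑ s, ∑ p ∈ univ.erase s, (c s*c p : ℂ))
        = (∑ s, c s)^2 - ∑ s, (c s)^2 := by
      rw [Finset.sum_congr rfl (fun (s : Fin N) (_ : s ∈ univ) =>
          Finset.sum_erase_eq_sub (f := fun p => c s * c p) (mem_univ s)),
        Finset.sum_sub_distrib, pow_two (∑ s, c s), Finset.sum_mul_sum]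
      exact congrArg₂ (· - ·) rfl (Finset.sum_congr rfl fun s _ => by ring)
    have csym : (∑ s, ∑ p ∈ univ.erase s, (c p*z p^2*(c s*(1/(z p - z s))))*(1/(x - z p)))
        = ∑ s, ∑ p ∈ univ.erase s, (c s*z s^2*(c p*(1/(z s - z p))))*(1/(x - z s)) :=
      sum_swap_erase (fun s p => (c p*z p^2*(c s*(1/(z p - z s))))*(1/(x - z p)))
    have cfac : (∑ s, ∑ p ∈ univ.erase s, (c s*z s^2*(c p*(1/(z s - z p))))*(1/(x - z s)))
        = ∑ s, (c s * z s^2 * ∑ p ∈ univ.erase s, c p * (1/(z s - z p)))*(1/(x - z s)) := by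
      refine Finset.sum_congr rfl fun s _ => ?_
      rw [Finset.mul_sum, Finset.sum_mul]
    have cmul : (∑ s, 2*(c s*(c s+1)*(z s/(x - z s))))
        = 2*∑ s, c s*(c s+1)*(z s/(x - z s)) := by
      rw [Finset.mul_sum]
    linear_combination e0 + Finset.sum_congr rfl e1' + e2' + cconst + csym + 2*cfac + cmul
  -- h6 : Bethe ansatz equations kill the t-poles
  have h6 : 2*(∑ i, (t i^2 * ∑ j ∈ univ.erase i, 1/(t i - t j)) * (1/(x - t i)))
      - 2*(∑ i, (t i^2 * ∑ s, c s * (1/(t i - z s)))*(1/(x - t i)))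
      + (2*a+1)*(∑ i, t i/(x - t i)) = 0 := by
    have key : ∀ i ∈ (univ : Finset (Fin m')),
        2*((t i^2 * ∑ j ∈ univ.erase i, 1/(t i - t j)) * (1/(x - t i)))
          - 2*((t i^2 * ∑ s, c s * (1/(t i - z s)))*(1/(x - t i)))
          + (2*a+1)*(t i/(x - t i)) = 0 := by
      intro i _
      have hb := hBAE i
      rw [show (∑ j ∈ univ.erase i, 2/(t i - t j))
          = 2 * ∑ j ∈ univ.erase i, 1/(t i - t j) by
        rw [Finset.mul_sum]; exact Finset.sum_congr rfl fun j _ => by ring] at hb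
      rw [show (∑ s, 2 * c s / (t i - z s)) = 2 * ∑ s, c s * (1/(t i - z s)) by
        rw [Finset.mul_sum]; exact Finset.sum_congr rfl fun s _ => by ring] at hb
      linear_combination (t i^2*(1/(x - t i))) * hb
        - ((2*a+1)*(t i)*(1/(x - t i))) * (mul_inv_cancel₀ (ht0 i))
    have hz' : (∑ i, (2*((t i^2 * ∑ j ∈ univ.erase i, 1/(t i - t j)) * (1/(x - t i)))
          - 2*((t i^2 * ∑ s, c s * (1/(t i - z s)))*(1/(x - t i)))
          + (2*a+1)*(t i/(x - t i)))) = 0 := Finset.sum_eq_zero key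
    have hsplit : (∑ i, (2*((t i^2 * ∑ j ∈ univ.erase i, 1/(t i - t j)) * (1/(x - t i)))
          - 2*((t i^2 * ∑ s, c s * (1/(t i - z s)))*(1/(x - t i)))
          + (2*a+1)*(t i/(x - t i))))
        = (∑ i, 2*((t i^2 * ∑ j ∈ univ.erase i, 1/(t i - t j)) * (1/(x - t i))))
          - (∑ i, 2*((t i^2 * ∑ s, c s * (1/(t i - z s)))*(1/(x - t i))))
          + ∑ i, (2*a+1)*(t i/(x - t i)) := by
      rw [Finset.sum_add_distrib, Finset.sum_sub_distrib]
    have m1 : (∑ i, 2*((t i^2 * ∑ j ∈ univ.erase i, 1/(t i - t j)) * (1/(x - t i))))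
        = 2*∑ i, (t i^2 * ∑ j ∈ univ.erase i, 1/(t i - t j)) * (1/(x - t i)) := by
      rw [Finset.mul_sum]
    have m2 : (∑ i, 2*((t i^2 * ∑ s, c s * (1/(t i - z s)))*(1/(x - t i))))
        = 2*∑ i, (t i^2 * ∑ s, c s * (1/(t i - z s)))*(1/(x - t i)) := by
      rw [Finset.mul_sum]
    have m3 : (∑ i, (2*a+1)*(t i/(x - t i))) = (2*a+1)*∑ i, t i/(x - t i) := by
      rw [Finset.mul_sum]
    linear_combination hz' - hsplit - m1 + m2 - m3
  -- h7 : z-pole coefficients match the eigenvalues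
  have h7 : -(2*a+1)*(∑ s, c s*(z s/(x - z s)))
      - 2*(∑ s, (c s * z s^2 * ∑ i, 1/(z s - t i))*(1/(x - z s)))
      + 2*(∑ s, c s*(c s+1)*(z s/(x - z s)))
      + 2*(∑ s, (c s * z s^2 * ∑ p ∈ univ.erase s, c p * (1/(z s - z p)))*(1/(x - z s)))
      = ∑ s, (c s * (c s + 1) + k s) * (z s / (x - z s)) := by
    have key : ∀ s ∈ (univ : Finset (Fin N)),
        (-(2*a+1)*(c s*(z s/(x - z s)))
          - 2*((c s * z s^2 * ∑ i, 1/(z s - t i))*(1/(x - z s)))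
          + 2*(c s*(c s+1)*(z s/(x - z s)))
          + 2*((c s * z s^2 * ∑ p ∈ univ.erase s, c p * (1/(z s - z p)))*(1/(x - z s))))
        = (c s * (c s + 1) + k s) * (z s / (x - z s)) := by
      intro s _
      have hk' := hk s
      rw [show (∑ p ∈ univ.erase s, c p * (z s / (z s - z p)))
          = z s * ∑ p ∈ univ.erase s, c p * (1/(z s - z p)) by
        rw [Finset.mul_sum]; exact Finset.sum_congr rfl fun p _ => by ring] at hk'
      rw [show (∑ i, z s / (t i - z s)) = -(z s * ∑ i, 1/(z s - t i)) by
        rw [Finset.mul_sum, ← Finset.sum_neg_distrib]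
        refine Finset.sum_congr rfl fun i _ => ?_
        have h1 : t i - z s ≠ 0 := sub_ne_zero.mpr (htz i s)
        have h2 : z s - t i ≠ 0 := sub_ne_zero.mpr (Ne.symm (htz i s))
        field_simp
        ring] at hk'
      linear_combination (-(z s*(1/(x - z s)))) * hk'
    have hsum : (∑ s, (-(2*a+1)*(c s*(z s/(x - z s)))
          - 2*((c s * z s^2 * ∑ i, 1/(z s - t i))*(1/(x - z s)))
          + 2*(c s*(c s+1)*(z s/(x - z s)))
          + 2*((c s * z s^2 * ∑ p ∈ univ.erase s, c p * (1/(z s - z p)))*(1/(x - z s)))))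
        = ∑ s, (c s * (c s + 1) + k s) * (z s / (x - z s)) :=
      Finset.sum_congr rfl key
    have hsplit : (∑ s, (-(2*a+1)*(c s*(z s/(x - z s)))
          - 2*((c s * z s^2 * ∑ i, 1/(z s - t i))*(1/(x - z s)))
          + 2*(c s*(c s+1)*(z s/(x - z s)))
          + 2*((c s * z s^2 * ∑ p ∈ univ.erase s, c p * (1/(z s - z p)))*(1/(x - z s)))))
        = (∑ s, -(2*a+1)*(c s*(z s/(x - z s))))
          - (∑ s, 2*((c s * z s^2 * ∑ i, 1/(z s - t i))*(1/(x - z s))))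
          + (∑ s, 2*(c s*(c s+1)*(z s/(x - z s))))
          + ∑ s, 2*((c s * z s^2 * ∑ p ∈ univ.erase s, c p * (1/(z s - z p)))*(1/(x - z s))) := by
      rw [Finset.sum_add_distrib, Finset.sum_add_distrib, Finset.sum_sub_distrib]
    have m1 : (∑ s, -(2*a+1)*(c s*(z s/(x - z s))))
        = -(2*a+1)*∑ s, c s*(z s/(x - z s)) := by rw [Finset.mul_sum]
    have m2 : (∑ s, 2*((c s * z s^2 * ∑ i, 1/(z s - t i))*(1/(x - z s))))
        = 2*∑ s, (c s * z s^2 * ∑ i, 1/(z s - t i))*(1/(x - z s)) := by rw [Finset.mul_sum]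
    have m3 : (∑ s, 2*(c s*(c s+1)*(z s/(x - z s))))
        = 2*∑ s, c s*(c s+1)*(z s/(x - z s)) := by rw [Finset.mul_sum]
    have m4 : (∑ s, 2*((c s * z s^2 * ∑ p ∈ univ.erase s, c p * (1/(z s - z p)))*(1/(x - z s))))
        = 2*∑ s, (c s * z s^2 * ∑ p ∈ univ.erase s, c p * (1/(z s - z p)))*(1/(x - z s)) := by
      rw [Finset.mul_sum]
    linear_combination hsum - hsplit - m1 + m2 - m3 - m4
  -- h8 : constant terms
  have h8 : a^2 + (m':ℂ)*((m':ℂ)-1) - 2*((m':ℂ)*(∑ s, c s))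
      + ((∑ s, c s*(c s+1)) + ((∑ s, c s)^2 - ∑ s, (c s)^2))
      + (2*a+1)*(m':ℂ) - (2*a+1)*(∑ s, c s) = (a + m' - ∑ s, c s)^2 := by
    have hcc : (∑ s, c s*(c s+1)) = (∑ s, (c s)^2) + ∑ s, c s := by
      rw [← Finset.sum_add_distrib]
      exact Finset.sum_congr rfl fun s _ => by ring
    linear_combination hcc
  linear_combination e1 + h3 - 2*h4 + h5 + (2*a+1)*h1 - (2*a+1)*h2 + h6 + h7 + h8

/-- Corollary 6.2 of the paper.  If `t⁰` solves the Bethe ansatz equations for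
`(z; μ; V[ν])`, `ν = M - 2m'`, and `w` is a holomorphic nowhere-vanishing branch of
`Π_i (x-t⁰_i) x^{(ν/2-μ)/2} Π_s (x-z_s)^{-m_s/2}` on an open set `U` avoiding
`0, t⁰_1,…,t⁰_{m'}, z_1,…,z_n`, then `w` lies in the kernel of the fundamental differential
operator `∂_u² + E₂`, i.e. `(2πi)²(x²w'' + xw') + E₂(x) w = 0` on `U`. -/

theorem statement8
    (n : ℕ) (hn : 1 < n) (m : Fin n → ℕ) (hm : ∀ s, 0 < m s)
    (M : ℕ) (hM : M = ∑ s, m s)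
    (z : Fin n → ℂ) (hz0 : ∀ s, z s ≠ 0) (hz : Function.Injective z)
    (μ : ℂ) (m' : ℕ) (ν : ℂ) (hν : ν = (M : ℂ) - 2 * (m' : ℂ))
    (t : Fin m' → ℂ) (ht : BAE m z μ t)
    (U : Set ℂ) (hU : IsOpen U)
    (hUavoid : ∀ x ∈ U, x ≠ 0 ∧ (∀ i, x ≠ t i) ∧ (∀ s, x ≠ z s))
    (w w' w'' : ℂ → ℂ)
    (hw : ∀ x ∈ U, HasDerivAt w (w' x) x)
    (hw' : ∀ x ∈ U, HasDerivAt w' (w'' x) x)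
    (hw0 : ∀ x ∈ U, w x ≠ 0)
    (hwlog : ∀ x ∈ U, w' x / w x
        = (ν / 2 - μ) / (2 * x) + (∑ i, 1 / (x - t i)) - ∑ s, ((m s : ℂ) / 2) / (x - z s)) :
    ∀ x ∈ U,
      (2 * (Real.pi : ℂ) * Complex.I) ^ 2 * (x ^ 2 * w'' x + x * w' x)
        + E2fun m z μ t x * w x = 0 := by
  subst hν
  obtain ⟨htinj, ht0, htzs, hbae⟩ := ht
  have hsumM : (∑ u, ((m u : ℕ) : ℂ)) = (M : ℂ) := by rw [hM, Nat.cast_sum]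
  have hSc : (∑ s, ((m s : ℂ)/2)) = (M : ℂ)/2 := by rw [← Finset.sum_div, hsumM]
  set A : ℂ := (((M:ℂ) - 2*(m':ℂ))/2 - μ)/2 with hA
  set L : ℂ → ℂ := fun y => A*(1/y) + (∑ i, 1/(y - t i)) - ∑ s, ((m s:ℂ)/2) * (1/(y - z s))
    with hL
  have hw'eq : ∀ y ∈ U, w' y = L y * w y := by
    intro y hy
    obtain ⟨hy0, -, -⟩ := hUavoid y hy
    have h := (div_eq_iff (hw0 y hy)).mp (hwlog y hy)
    rw [h]
    have hLy : L y = (((M:ℂ) - 2*(m':ℂ))/2 - μ)/(2*y) + (∑ i, 1/(y - t i))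
        - ∑ s, ((m s:ℂ)/2)/(y - z s) := by
      show A*(1/y) + (∑ i, 1/(y - t i)) - (∑ s, ((m s:ℂ)/2) * (1/(y - z s))) = _
      rw [hA, div_mul_div_comm, mul_one,
        Finset.sum_congr rfl (fun s (_ : s ∈ (univ : Finset (Fin n))) =>
          (by ring : ((m s:ℂ)/2) * (1/(y - z s)) = ((m s:ℂ)/2)/(y - z s)))]
    rw [hLy]
  intro x hx
  obtain ⟨hx0, hxt, hxz⟩ := hUavoid x hx
  set D0 : ℂ := A * -((x^2)⁻¹) + (∑ i, -(1/(x - t i)^2))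
      - ∑ s, ((m s:ℂ)/2) * -(1/(x - z s)^2) with hD0
  have hLd : HasDerivAt L D0 x := by
    rw [hL, hD0]
    have h1 : HasDerivAt (fun y : ℂ => A*(1/y)) (A * -((x^2)⁻¹)) x := by
      simpa [one_div] using (hasDerivAt_inv hx0).const_mul A
    have h2 : HasDerivAt (fun y : ℂ => ∑ i, 1/(y - t i)) (∑ i, -(1/(x - t i)^2)) x := by
      refine HasDerivAt.fun_sum fun i _ => ?_
      simpa [one_div, neg_div] using
        ((hasDerivAt_id x).sub_const (t i)).fun_inv (sub_ne_zero.mpr (hxt i))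
    have h3 : HasDerivAt (fun y : ℂ => ∑ s, ((m s:ℂ)/2) * (1/(y - z s)))
        (∑ s, ((m s:ℂ)/2) * -(1/(x - z s)^2)) x := by
      refine HasDerivAt.fun_sum fun s _ => ?_
      have h := ((hasDerivAt_id x).sub_const (z s)).fun_inv (sub_ne_zero.mpr (hxz s))
      simpa [one_div, neg_div, mul_neg] using h.const_mul ((m s:ℂ)/2)
    exact (h1.add h2).sub h3
  have hwL : HasDerivAt (fun y => L y * w y) (D0 * w x + L x * w' x) x :=
    hLd.mul (hw x hx)
  have hEv : w' =ᶠ[nhds x] fun y => L y * w y := by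
    filter_upwards [hU.mem_nhds hx] with y hy using hw'eq y hy
  have hw''eq : w'' x = D0 * w x + L x * w' x :=
    (hw' x hx).unique (hwL.congr_of_eventuallyEq hEv)
  -- the Bethe ansatz input for the scalar identity
  have hbae' : ∀ i, (2*A+1) / t i + (∑ j ∈ univ.erase i, 2/(t i - t j))
      - (∑ s, 2 * ((m s:ℂ)/2) / (t i - z s)) = 0 := by
    intro i
    have hb := hbae i
    have hC : (∑ s, (m s : ℂ)/(t i - z s)) = ∑ s, 2*((m s:ℂ)/2)/(t i - z s) :=
      Finset.sum_congr rfl fun s _ => by ring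
    rw [hA]
    linear_combination hb + hC - (1/2)*(t i)⁻¹ * hsumM
  have hk' : ∀ s : Fin n, kEig m z μ t s
      = (m s:ℂ)/2 * (((m s:ℂ)/2 - 2*A)
        + 2 * (∑ p ∈ univ.erase s, ((m p:ℂ)/2) * (z s / (z s - z p)))
        + 2 * ∑ i, z s / (t i - z s)) := by
    intro s
    have hB : (∑ p ∈ univ.erase s, (m p : ℂ) * z s / (z s - z p))
        = 2 * ∑ p ∈ univ.erase s, ((m p:ℂ)/2) * (z s / (z s - z p)) := by
      rw [Finset.mul_sum]; exact Finset.sum_congr rfl fun p _ => by ring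
    rw [kEig, hA]
    linear_combination hB * ((m s:ℂ)/2) - ((m s:ℂ)/4) * hsumM
  have SK := scalar_key (m' := m') (N := n) x A t z
    (fun s => (m s:ℂ)/2) (kEig m z μ t) hx0 hxt hxz ht0 htzs htinj hz hk' hbae'
  -- rewrite E2fun into the pole form
  have hE2 : E2fun m z μ t x = (2*(Real.pi:ℂ)*I)^2 *
      (-((A + (m':ℂ) - ∑ s, ((m s:ℂ)/2))^2
        + (∑ s, ((m s:ℂ)/2 * ((m s:ℂ)/2 + 1) + kEig m z μ t s) * (z s / (x - z s)))
        + ∑ s, (m s:ℂ)/2 * ((m s:ℂ)/2 + 1) * (z s^2 / (x - z s)^2))) := by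
    have per : ∀ s ∈ (univ : Finset (Fin n)),
        ((m s:ℂ) * ((m s:ℂ) + 2) / 4 + kEig m z μ t s) / (1 - x / z s)
          - ((m s:ℂ) * ((m s:ℂ) + 2) / 4) / (1 - x / z s) ^ 2
        = -(((m s:ℂ)/2 * ((m s:ℂ)/2 + 1) + kEig m z μ t s) * (z s / (x - z s))
            + (m s:ℂ)/2 * ((m s:ℂ)/2 + 1) * (z s^2 / (x - z s)^2)) := by
      intro s _
      have h1 : z s ≠ 0 := hz0 s
      have h2 : x - z s ≠ 0 := sub_ne_zero.mpr (hxz s)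
      have h3 : z s - x ≠ 0 := sub_ne_zero.mpr (Ne.symm (hxz s))
      have h4 : (1:ℂ) - x / z s ≠ 0 := by
        rw [show (1:ℂ) - x / z s = (z s - x)/z s by field_simp]
        exact div_ne_zero h3 h1
      field_simp
      ring
    rw [E2fun, hsumM, Finset.sum_congr rfl per, Finset.sum_neg_distrib,
      Finset.sum_add_distrib, hSc, hA]
    ring
  rw [hw''eq, hw'eq x hx]
  have key : (2*(Real.pi:ℂ)*I)^2 * (x^2*D0 + x^2*(L x*L x) + x*(L x))
      + E2fun m z μ t x = 0 := by
    have hnt : (∑ i, -(1/(x - t i)^2)) = -∑ i, 1/(x - t i)^2 := Finset.sum_neg_distrib _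
    have hnz : (∑ s, ((m s:ℂ)/2) * -(1/(x - z s)^2))
        = -∑ s, ((m s:ℂ)/2) * (1/(x - z s)^2) := by
      rw [← Finset.sum_neg_distrib]
      exact Finset.sum_congr rfl fun s _ => by ring
    have hLx : L x = A*(1/x) + (∑ i, 1/(x - t i)) - ∑ s, ((m s:ℂ)/2) * (1/(x - z s)) := rfl
    rw [hE2, hD0, hLx]
    linear_combination (2*(Real.pi:ℂ)*I)^2 * SK + (2*(Real.pi:ℂ)*I)^2 * x^2 * hnt
      - (2*(Real.pi:ℂ)*I)^2 * x^2 * hnz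
  linear_combination (w x) * key


end
end Paper
end

section
/- Assume μ ≠ ν/2, where ν = M − 2m. Let t_1,…,t_m be pairwise distinct complex numbers with t_i ≠ z_s for all i and s, and let y(X) = Π_{i=1}^m (X − t_i). Suppose there exist a polynomial ỹ ∈ ℂ[X] and a constant c ∈ ℂ, c ≠ 0, such that (μ − ν/2)·y·ỹ + X·(y·ỹ′ − y′·ỹ) = c·Π_{s=1}^n (X − z_s)^{m_s} in ℂ[X]. Then every t_i is nonzero and (t_1,…,t_m) is a solution of the Bethe ansatz equations for the triple (z; μ; V[ν]): (1 − μ + ν/2)/t_i + Σ_{j≠i} 2/(t_i − t_j) − Σ_{s=1}^n m_s/(t_i − z_s) = 0 for i = 1,…,m. -/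
open Complex Finset

namespace Paper

noncomputable section

variable {n : ℕ}

variable (m : Fin n → ℕ)

open Polynomial in
private lemma derivative_finset_prod' {ι : Type*} [DecidableEq ι] (s : Finset ι)
    (f : ι → Polynomial ℂ) :
    derivative (∏ i ∈ s, f i) = ∑ i ∈ s, (∏ j ∈ s.erase i, f j) * derivative (f i) := by
  classical
  induction s using Finset.induction_on with
  | empty => simp
  | @insert a s ha ih =>
    rw [Finset.prod_insert ha, derivative_mul, ih, Finset.mul_sum, Finset.sum_insert ha,
      Finset.erase_insert ha]
    have hsum : ∑ x ∈ s, f a * ((∏ j ∈ s.erase x, f j) * derivative (f x))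
        = ∑ x ∈ s, (∏ j ∈ (insert a s).erase x, f j) * derivative (f x) :=
      Finset.sum_congr rfl fun j hj => by
        rw [Finset.erase_insert_of_ne (by rintro rfl; exact ha hj),
          Finset.prod_insert (fun h => ha (Finset.mem_of_mem_erase h))]
        ring
    rw [hsum]
    ring

open Polynomial in
/-- Lemma 7.2(ii) of the paper; Corollary 3.3 of [MV2].  Assume `μ ≠ ν/2`,
`ν = M - 2m'`.  If `t_1,…,t_{m'}` are pairwise distinct, `t_i ≠ z_s`, `y = Π_i (X - t_i)`
and there exist a polynomial `ỹ` and a nonzero constant `c` with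
`(μ - ν/2) y ỹ + X (y ỹ' - y' ỹ) = c Π_s (X - z_s)^{m_s}`, then every `t_i` is nonzero and
`t` solves the Bethe ansatz equations for `(z; μ; V[ν])`. -/
theorem statement10
    (n : ℕ) (hn : 1 < n) (m : Fin n → ℕ) (hm : ∀ s, 0 < m s)
    (M : ℕ) (hM : M = ∑ s, m s)
    (z : Fin n → ℂ) (hz0 : ∀ s, z s ≠ 0) (hz : Function.Injective z)
    (μ : ℂ) (m' : ℕ) (ν : ℂ) (hν : ν = (M : ℂ) - 2 * (m' : ℂ))
    (hμ : μ ≠ ν / 2)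
    (t : Fin m' → ℂ) (htinj : Function.Injective t) (htz : ∀ i s, t i ≠ z s)
    (Y : Polynomial ℂ) (c : ℂ) (hc : c ≠ 0)
    (hid : C (μ - ν / 2) * ((∏ i, (X - C (t i))) * Y)
          + X * ((∏ i, (X - C (t i))) * derivative Y
              - derivative (∏ i, (X - C (t i))) * Y)
        = C c * ∏ s, (X - C (z s)) ^ (m s)) :
    (∀ i, t i ≠ 0) ∧
      ∀ i, (1 - μ + ν / 2) / t i + (∑ j ∈ Finset.univ.erase i, 2 / (t i - t j))
          - ∑ s, (m s : ℂ) / (t i - z s) = 0 := by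
  classical
  have hA : μ - ν / 2 ≠ 0 := sub_ne_zero.mpr hμ
  have ht0 : ∀ i, t i ≠ 0 := by
    intro i hti
    have h0 := congrArg (Polynomial.eval 0) hid
    have hp : (∏ j, (X - C (t j)) : Polynomial ℂ).eval 0 = 0 := by
      rw [Polynomial.eval_prod]
      exact Finset.prod_eq_zero (Finset.mem_univ i) (by simp [hti])
    simp only [eval_add, eval_mul, eval_sub, eval_C, eval_X, eval_prod, eval_pow, hp,
      zero_mul, mul_zero, add_zero, zero_add, zero_sub, neg_zero] at h0
    exact (mul_ne_zero hc (Finset.prod_ne_zero_iff.mpr fun s _ =>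
      pow_ne_zero _ (by simpa using (hz0 s)))) h0.symm
  refine ⟨ht0, fun i => ?_⟩
  set a := t i with ha
  have ha0 : a ≠ 0 := ht0 i
  set q : Polynomial ℂ := ∏ j ∈ Finset.univ.erase i, (X - C (t j)) with hqdef
  have hyq : (∏ j, (X - C (t j)) : Polynomial ℂ) = (X - C a) * q :=
    (Finset.mul_prod_erase Finset.univ _ (Finset.mem_univ i)).symm
  set qa := q.eval a with hqa_def
  set qa' := (derivative q).eval a with hqa'_def
  set Ya := Y.eval a with hYa_def
  set Pa := ∏ s, (a - z s) ^ (m s) with hPa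
  have hts : ∀ j ∈ Finset.univ.erase i, a - t j ≠ 0 := fun j hj =>
    sub_ne_zero.mpr fun h => (Finset.mem_erase.mp hj).1 (htinj h).symm
  have hqav : qa = ∏ j ∈ Finset.univ.erase i, (a - t j) := by
    rw [hqa_def, hqdef, Polynomial.eval_prod]; simp
  have hqa0 : qa ≠ 0 := by
    rw [hqav]; exact Finset.prod_ne_zero_iff.mpr hts
  have hzs : ∀ s, a - z s ≠ 0 := fun s => sub_ne_zero.mpr (htz i s)
  have hPane : Pa ≠ 0 := Finset.prod_ne_zero_iff.mpr fun s _ => pow_ne_zero _ (hzs s)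
  have hy0 : (∏ j, (X - C (t j)) : Polynomial ℂ).eval a = 0 := by simp [hyq]
  have hy1 : (derivative (∏ j, (X - C (t j)) : Polynomial ℂ)).eval a = qa := by
    rw [hyq, derivative_mul]; simp [hqa_def]
  have hy2 : (derivative (derivative (∏ j, (X - C (t j)) : Polynomial ℂ))).eval a
      = 2 * qa' := by
    rw [hyq, derivative_mul]
    simp only [derivative_sub, derivative_X, derivative_C, sub_zero, one_mul,
      derivative_add, derivative_mul, eval_add, eval_mul, eval_sub, eval_X, eval_C]
    simp only [sub_self, zero_mul, add_zero]
    ring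
  have hPz : (∏ s, (X - C (z s)) ^ (m s) : Polynomial ℂ).eval a = Pa := by
    rw [Polynomial.eval_prod]; simp [hPa]
  set S := ∑ s, (m s : ℂ) / (a - z s) with hS
  set R := ∑ j ∈ Finset.univ.erase i, 1 / (a - t j) with hR
  have hDz : (derivative (∏ s, (X - C (z s)) ^ (m s) : Polynomial ℂ)).eval a
      = Pa * S := by
    rw [derivative_finset_prod', Polynomial.eval_finset_sum, hS, Finset.mul_sum]
    refine Finset.sum_congr rfl fun s _ => ?_
    rw [Polynomial.derivative_pow]
    simp only [derivative_sub, derivative_X, derivative_C, sub_zero, mul_one,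
      eval_mul, eval_prod, eval_pow, eval_sub, eval_X, eval_C, eval_natCast]
    rw [hPa, ← Finset.mul_prod_erase _ _ (Finset.mem_univ s)]
    have hpow : (a - z s) ^ (m s) = (a - z s) ^ (m s - 1) * (a - z s) := by
      conv_lhs => rw [show m s = (m s - 1) + 1 from (Nat.succ_pred_eq_of_pos (hm s)).symm]
      rw [pow_succ]
    rw [hpow]
    field_simp
    rw [eq_div_iff (hzs s)]
    ring
  have hq' : qa' = qa * R := by
    have hstep : qa' = ∑ j ∈ Finset.univ.erase i,
        ∏ k ∈ (Finset.univ.erase i).erase j, (a - t k) := by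
      rw [hqa'_def, hqdef, derivative_finset_prod', Polynomial.eval_finset_sum]
      refine Finset.sum_congr rfl fun j hj => ?_
      simp [Polynomial.eval_prod]
    rw [hstep, hqav, hR, Finset.mul_sum]
    refine Finset.sum_congr rfl fun j hj => ?_
    rw [← Finset.mul_prod_erase _ _ hj, mul_one_div, mul_comm (a - t j),
      mul_div_assoc, div_self (hts j hj), mul_one]
  have h1 : a * (qa * Ya) = -(c * Pa) := by
    have h := congrArg (Polynomial.eval a) hid
    simp only [eval_add, eval_mul, eval_sub, eval_C, eval_X, hy0, hy1, hPz,
      zero_mul, mul_zero, zero_sub] at h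
    linear_combination -h
  have h2 := congrArg (fun p : Polynomial ℂ => (derivative p).eval a) hid
  simp only [derivative_add, derivative_mul, derivative_sub, derivative_C, derivative_X,
    zero_mul, add_zero, zero_add, one_mul, mul_one, eval_add, eval_mul, eval_sub,
    eval_C, eval_X, hy0, hy1, hy2, hDz, mul_zero] at h2
  rw [hq'] at h2
  rw [← hYa_def] at h2
  have hYa0 : Ya ≠ 0 := by
    intro h
    rw [h, mul_zero, mul_zero] at h1
    exact mul_ne_zero hc hPane (neg_eq_zero.mp h1.symm)
  clear_value a q qa qa' Ya Pa S R
  have key : ((μ - ν / 2) - 1 - 2 * a * R + a * S) * (qa * Ya) = 0 := by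
    linear_combination h2 + S * h1
  have key2 : (μ - ν / 2) - 1 - 2 * a * R + a * S = 0 := by
    rcases mul_eq_zero.mp key with h | h
    · exact h
    · exact absurd h (mul_ne_zero hqa0 hYa0)
  have h2R : (∑ j ∈ Finset.univ.erase i, 2 / (a - t j)) = 2 * R := by
    rw [hR, Finset.mul_sum]
    exact Finset.sum_congr rfl fun j _ => by ring
  rw [h2R]
  have hfin : (1 - μ + ν / 2) / a + 2 * R - S
      = -((μ - ν / 2 - 1 - 2 * a * R + a * S) / a) := by
    field_simp
    ring
  rw [hfin, key2]
  simp


end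
end Paper
end

section
/- Assume μ ∉ ν/2 + ℤ_{≥0}, ν = M − 2m. Let t⁰ be a solution of the Bethe ansatz equations for (z; μ; V[ν]) and ỹ(X) = Π_{i=1}^{M−m}(X − t̃⁰_i) the unique monic polynomial of degree M − m with (μ − ν/2)·y·ỹ + X·(y·ỹ′ − y′·ỹ) = (μ + ν/2)·Π_{s=1}^n (X − z_s)^{m_s}, y(X) = Π_{i=1}^m(X − t⁰_i); assume t̃⁰_1,…,t̃⁰_{M−m} are pairwise distinct and ỹ(z_s) ≠ 0 for all s. Then for every s = 1,…,n the eigenvalue of K_s(z,μ) on the Bethe vector ω(t⁰,z) equals the eigenvalue of K_s(z,−μ) on ω(t̃⁰,z); explicitly, (m_s/2)·[(μ − ν/2 + m_s/2) + Σ_{p≠s} m_p·z_s/(z_s − z_p) + 2·Σ_{i=1}^m z_s/(t⁰_i − z_s)] = (m_s/2)·[(−μ + ν/2 + m_s/2) + Σ_{p≠s} m_p·z_s/(z_s − z_p) + 2·Σ_{i=1}^{M−m} z_s/(t̃⁰_i − z_s)]. -/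
open Complex Finset

namespace Paper

noncomputable section

variable {n : ℕ}

variable (m : Fin n → ℕ)

open Polynomial in
/-- Corollary 7.6 of the paper.  Under the hypotheses of Lemma 7.4, for
every `s` the eigenvalue of `K_s(z,μ)` on `ω(t⁰,z)` equals the eigenvalue of `K_s(z,-μ)`
on `ω(t̃⁰,z)`; explicitly `k_s(t⁰,z,μ) = k_s(t̃⁰,z,-μ)` (the latter computed in weight
`-ν`). -/
theorem statement14
    (n : ℕ) (hn : 1 < n) (m : Fin n → ℕ) (hm : ∀ s, 0 < m s)
    (M : ℕ) (hM : M = ∑ s, m s)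
    (z : Fin n → ℂ) (hz0 : ∀ s, z s ≠ 0) (hz : Function.Injective z)
    (μ : ℂ) (m' : ℕ) (hm' : m' ≤ M) (ν : ℂ) (hν : ν = (M : ℂ) - 2 * (m' : ℂ))
    (hμ : ∀ k : ℕ, μ ≠ ν / 2 + (k : ℂ))
    (t : Fin m' → ℂ) (ht : BAE m z μ t)
    (tt : Fin (M - m') → ℂ) (httinj : Function.Injective tt)
    (httz : ∀ i s, tt i ≠ z s)
    (hid : C (μ - ν / 2) * ((∏ i, (X - C (t i))) * ∏ i, (X - C (tt i)))
          + X * ((∏ i, (X - C (t i))) * derivative (∏ i, (X - C (tt i)))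
              - derivative (∏ i, (X - C (t i))) * ∏ i, (X - C (tt i)))
        = C (μ + ν / 2) * ∏ s, (X - C (z s)) ^ (m s)) :
    ∀ s : Fin n,
      ((m s : ℂ) / 2) * ((μ - ν / 2 + (m s : ℂ) / 2)
          + (∑ p ∈ Finset.univ.erase s, (m p : ℂ) * z s / (z s - z p))
          + 2 * ∑ i, z s / (t i - z s))
        = ((m s : ℂ) / 2) * ((-μ + ν / 2 + (m s : ℂ) / 2)
          + (∑ p ∈ Finset.univ.erase s, (m p : ℂ) * z s / (z s - z p))
          + 2 * ∑ i, z s / (tt i - z s)) := by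
  intro s
  classical
  have htne : ∀ i, z s - t i ≠ 0 := fun i => sub_ne_zero.mpr fun h => ht.2.2.1 i s h.symm
  have httne : ∀ i, z s - tt i ≠ 0 := fun i => sub_ne_zero.mpr fun h => httz i s h.symm
  have hPne : (∏ i, (z s - t i)) ≠ 0 := Finset.prod_ne_zero_iff.mpr fun i _ => htne i
  have hQne : (∏ i, (z s - tt i)) ≠ 0 := Finset.prod_ne_zero_iff.mpr fun i _ => httne i
  -- evaluation of derivative of ∏ (X - C (u i)) at z s
  have key : ∀ {k : ℕ} (u : Fin k → ℂ), (∀ i, z s - u i ≠ 0) →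
      ∀ S : Finset (Fin k),
      Polynomial.eval (z s) (Polynomial.derivative (∏ i ∈ S, (Polynomial.X - Polynomial.C (u i))))
        = (∏ i ∈ S, (z s - u i)) * ∑ i ∈ S, (z s - u i)⁻¹ := by
    intro k u hu S
    induction S using Finset.induction_on with
    | empty => simp
    | @insert a S ha ih =>
      rw [Finset.prod_insert ha, Polynomial.derivative_mul, Finset.prod_insert ha,
        Finset.sum_insert ha]
      simp only [Polynomial.eval_add, Polynomial.eval_mul, Polynomial.eval_sub,
        Polynomial.eval_X, Polynomial.eval_C, Polynomial.derivative_sub,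
        Polynomial.derivative_X, Polynomial.derivative_C, sub_zero, Polynomial.eval_one,
        Polynomial.eval_prod, ih]
      field_simp
      linear_combination -(∏ i ∈ S, (z s - u i)) * mul_inv_cancel₀ (hu a)
  have heval := congrArg (Polynomial.eval (z s)) hid
  simp only [Polynomial.eval_add, Polynomial.eval_mul, Polynomial.eval_sub, Polynomial.eval_C,
    Polynomial.eval_X, Polynomial.eval_prod, Polynomial.eval_pow,
    key t htne Finset.univ, key tt httne Finset.univ] at heval
  -- the RHS vanishes at z s
  have hrhs : (∏ p, (z s - z p) ^ m p) = 0 := by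
    refine Finset.prod_eq_zero (Finset.mem_univ s) ?_
    simp [pow_eq_zero_iff, (hm s).ne']
  rw [hrhs, mul_zero] at heval
  -- divide by P * Q
  have E2 : μ - ν / 2 + z s * (∑ i, (z s - tt i)⁻¹) - z s * (∑ i, (z s - t i)⁻¹) = 0 := by
    have h := mul_left_cancel₀ (mul_ne_zero hPne hQne)
      (show (∏ i, (z s - t i)) * (∏ i, (z s - tt i)) *
          (μ - ν / 2 + z s * (∑ i, (z s - tt i)⁻¹) - z s * (∑ i, (z s - t i)⁻¹))
        = (∏ i, (z s - t i)) * (∏ i, (z s - tt i)) * 0 by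
        rw [mul_zero]; linear_combination heval)
    simpa using h
  have hA : ∑ i, z s / (t i - z s) = -(z s * ∑ i, (z s - t i)⁻¹) := by
    rw [Finset.mul_sum, ← Finset.sum_neg_distrib]
    refine Finset.sum_congr rfl fun i _ => ?_
    rw [show t i - z s = -(z s - t i) by ring, div_neg, div_eq_mul_inv]
  have hB : ∑ i, z s / (tt i - z s) = -(z s * ∑ i, (z s - tt i)⁻¹) := by
    rw [Finset.mul_sum, ← Finset.sum_neg_distrib]
    refine Finset.sum_congr rfl fun i _ => ?_
    rw [show tt i - z s = -(z s - tt i) by ring, div_neg, div_eq_mul_inv]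
  rw [hA, hB]
  linear_combination (m s : ℂ) * E2


end
end Paper
end

section
/- Assume μ ∉ ν/2 + ℤ_{≥0}, ν = M − 2m. Let t⁰ be a solution of the Bethe ansatz equations for (z; μ; V[ν]) and ỹ(X) = Π_{i=1}^{M−m}(X − t̃⁰_i) the unique monic polynomial of degree M − m with (μ − ν/2)·y·ỹ + X·(y·ỹ′ − y′·ỹ) = (μ + ν/2)·Π_{s=1}^n (X − z_s)^{m_s}, y(X) = Π_{i=1}^m(X − t⁰_i); assume the t̃⁰_i are pairwise distinct and ỹ(z_s) ≠ 0 for all s (so that, by Lemma 7.4 of the paper, t̃⁰ solves the Bethe ansatz equations for (z; −μ; V[−ν])). Then the two eigenvalue functions coincide: for every x ∈ ℂ∖{z_1,…,z_n}, E_2(x; t⁰, z, μ, ν) = E_2(x; t̃⁰, z, −μ, −ν), where E_2(x; t, z, μ, ν) = (2πi)²·[ −(μ+ν/2)²/4 + Σ_{s=1}^n ( (m_s(m_s+2)/4 + k_s(t,z,μ,ν))/(1 − x/z_s) − (m_s(m_s+2)/4)/(1 − x/z_s)² ) ]. Equivalently, the conjugated fundamental differential operators ℰ^c of the two solutions coincide.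 -/
open Complex Finset

namespace Paper

noncomputable section

variable {n : ℕ}

variable (m : Fin n → ℕ)

open Polynomial in
lemma eval_derivative_prod_linear : ∀ {k : ℕ} (a : Fin k → ℂ) (w : ℂ),
    (∀ i, w - a i ≠ 0) →
    (derivative (∏ i, (X - C (a i)))).eval w
      = (∏ i, (w - a i)) * ∑ i, (w - a i)⁻¹ := by
  intro k
  induction k with
  | zero => intro a w _; simp
  | succ k ih =>
    intro a w h
    rw [Fin.prod_univ_succ, derivative_mul, eval_add, eval_mul, eval_mul,
      derivative_sub, Polynomial.derivative_X, Polynomial.derivative_C, sub_zero,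
      eval_one, one_mul, eval_sub, eval_X, eval_C,
      ih (fun i => a i.succ) w (fun i => h i.succ),
      Fin.prod_univ_succ (fun i => w - a i), Fin.sum_univ_succ (fun i => (w - a i)⁻¹),
      eval_prod]
    simp only [eval_sub, eval_X, eval_C]
    field_simp [h 0]

open Polynomial in
/-- Lemma 8.3 of the paper.  Under the hypotheses of Lemma 7.4 (so that
`t̃⁰` solves the Bethe ansatz equations for `(z; -μ; V[-ν])`), the eigenvalue functions of
the two solutions coincide: `E₂(x; t⁰, z, μ, ν) = E₂(x; t̃⁰, z, -μ, -ν)` for every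
`x ∈ ℂ∖{z_1,…,z_n}`; equivalently, the conjugated fundamental differential operators `ℰᶜ`
of the two solutions coincide. -/
theorem statement15
    (n : ℕ) (hn : 1 < n) (m : Fin n → ℕ) (hm : ∀ s, 0 < m s)
    (M : ℕ) (hM : M = ∑ s, m s)
    (z : Fin n → ℂ) (hz0 : ∀ s, z s ≠ 0) (hz : Function.Injective z)
    (μ : ℂ) (m' : ℕ) (hm' : m' ≤ M) (ν : ℂ) (hν : ν = (M : ℂ) - 2 * (m' : ℂ))
    (hμ : ∀ k : ℕ, μ ≠ ν / 2 + (k : ℂ))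
    (t : Fin m' → ℂ) (ht : BAE m z μ t)
    (tt : Fin (M - m') → ℂ) (httinj : Function.Injective tt)
    (httz : ∀ i s, tt i ≠ z s)
    (hid : C (μ - ν / 2) * ((∏ i, (X - C (t i))) * ∏ i, (X - C (tt i)))
          + X * ((∏ i, (X - C (t i))) * derivative (∏ i, (X - C (tt i)))
              - derivative (∏ i, (X - C (t i))) * ∏ i, (X - C (tt i)))
        = C (μ + ν / 2) * ∏ s, (X - C (z s)) ^ (m s)) :
    ∀ x : ℂ, (∀ s, x ≠ z s) → E2fun m z μ t x = E2fun m z (-μ) tt x := by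
  subst hν
  have nc : ((M - m' : ℕ) : ℂ) = (M : ℂ) - (m' : ℂ) := by
    exact Nat.cast_sub hm'
  have hMc : (∑ u, (m u : ℂ)) = (M : ℂ) := by rw [hM]; push_cast; ring
  have hA : ∀ (s : Fin n) (i : Fin m'), z s - t i ≠ 0 := fun s i =>
    sub_ne_zero.mpr fun e => ht.2.2.1 i s e.symm
  have hB : ∀ (s : Fin n) (i : Fin (M - m')), z s - tt i ≠ 0 := fun s i =>
    sub_ne_zero.mpr fun e => httz i s e.symm
  have key : ∀ s : Fin n,
      (μ - ((M : ℂ) - 2 * (m' : ℂ)) / 2)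
        + z s * ((∑ i, (z s - tt i)⁻¹) - ∑ i, (z s - t i)⁻¹) = 0 := by
    intro s
    have h0 := congrArg (Polynomial.eval (z s)) hid
    simp only [eval_add, eval_mul, eval_C, eval_X, eval_sub, eval_prod, eval_pow] at h0
    rw [eval_derivative_prod_linear t (z s) (hA s),
      eval_derivative_prod_linear tt (z s) (hB s)] at h0
    have hR : (∏ p, (z s - z p) ^ (m p)) = 0 :=
      Finset.prod_eq_zero (Finset.mem_univ s) (by simp [(hm s).ne'])
    rw [hR, mul_zero] at h0
    have hA0 : (∏ i, (z s - t i)) ≠ 0 := Finset.prod_ne_zero_iff.mpr fun i _ => hA s i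
    have hB0 : (∏ i, (z s - tt i)) ≠ 0 := Finset.prod_ne_zero_iff.mpr fun i _ => hB s i
    have hz2 : ((μ - ((M : ℂ) - 2 * (m' : ℂ)) / 2)
          + z s * ((∑ i, (z s - tt i)⁻¹) - ∑ i, (z s - t i)⁻¹))
        * ((∏ i, (z s - t i)) * ∏ i, (z s - tt i)) = 0 := by
      linear_combination h0
    rcases mul_eq_zero.mp hz2 with h | h
    · exact h
    · exact absurd h (mul_ne_zero hA0 hB0)
  have hsum : ∀ (s : Fin n) (k : ℕ) (a : Fin k → ℂ) (ha : ∀ i, z s - a i ≠ 0),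
      (∑ i, z s / (a i - z s)) = -z s * ∑ i, (z s - a i)⁻¹ := by
    intro s k a ha
    rw [Finset.mul_sum]
    refine Finset.sum_congr rfl fun i _ => ?_
    rw [div_eq_mul_inv, show a i - z s = -(z s - a i) by ring, inv_neg]
    ring
  have hk : ∀ s, kEig m z μ t s = kEig m z (-μ) tt s := by
    intro s
    simp only [kEig]
    rw [hsum s m' t (hA s), hsum s (M - m') tt (hB s), nc, hMc]
    linear_combination (m s : ℂ) * key s
  intro x hx
  simp only [E2fun]
  have hS : (∑ s, (((m s : ℂ) * ((m s : ℂ) + 2) / 4 + kEig m z μ t s) / (1 - x / z s)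
          - ((m s : ℂ) * ((m s : ℂ) + 2) / 4) / (1 - x / z s) ^ 2))
      = ∑ s, (((m s : ℂ) * ((m s : ℂ) + 2) / 4 + kEig m z (-μ) tt s) / (1 - x / z s)
          - ((m s : ℂ) * ((m s : ℂ) + 2) / 4) / (1 - x / z s) ^ 2) :=
    Finset.sum_congr rfl fun s _ => by rw [hk s]
  rw [hS, nc, hMc]
  ring


end
end Paper
end
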